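/- arXiv:1401.1444 — 3 statements merged into one kernel-verified Lean document; each statement's English description precedes it below -/
import Mathlib

section
/- Let r be a positive integer with r \equiv 3 (mod 6). For a nonnegative integer n, let t be the number of digits equal to 1 in the 3-adic expansion of n. Then the generalised Franel numbers a_n(r,0) satisfy: a_n(r,0) \equiv 1 (mod 9) iff t \equiv 0 (mod 6); a_n(r,0) \equiv 2 (mod 9) iff t \equiv 1 (mod 6); a_n(r,0) \equiv 4 (mod 9) iff t \equiv 2 (mod 6); a_n(r,0) \equiv 8 (mod 9) iff t \equiv 3 (mod 6); a_n(r,0) \equiv 7 (mod 9) iff t \equiv 4 (mod 6); a_n(r,0) \equiv 5 (mod 9) iff t \equiv 5 (mod 6); and a_n(r,0) is never \equiv 3 or 6 (mod 9). -/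
open Finset

/-- The generalised Apéry numbers `a_n(r,s) = ∑_{k=0}^n C(n,k)^r C(n+k,k)^s`. -/
def apery (r s n : ℕ) : ℕ :=
  ∑ k ∈ Finset.range (n + 1), n.choose k ^ r * (n + k).choose k ^ s

/-- The number of digits among `d 0, …, d m` equal to `v`. -/
def digitCount (d : ℕ → ℕ) (m v : ℕ) : ℕ :=
  ((Finset.range (m + 1)).filter fun i => d i = v).card

/-- The number of occurrences of the string `ab` in the 3-adic expansion with digits
`d 0, …, d m` (using the convention that digits above position `m` are zero): indices `ν`
with `1 ≤ ν ≤ m + 1`, `d ν = a` and `d (ν - 1) = b`. -/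
def occ (d : ℕ → ℕ) (m a b : ℕ) : ℕ :=
  ((Finset.Icc 1 (m + 1)).filter fun ν => d ν = a ∧ d (ν - 1) = b).card

/-- The 3-adic expansion of `n` (digits `d 0, …, d m`) has exactly one occurrence of the
string `ab`, and all digits not belonging to this occurrence are `0` or `2`. -/
def uniqueOcc (d : ℕ → ℕ) (m a b : ℕ) : Prop :=
  occ d m a b = 1 ∧
  ∀ ν ∈ Finset.Icc 1 (m + 1), (d ν = a ∧ d (ν - 1) = b) →
    ∀ i ≤ m, i ≠ ν → i ≠ ν - 1 → (d i = 0 ∨ d i = 2)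

namespace FranelAux

/-- Teichmüller-type lift `ZMod 3 → ZMod 9`. -/
def F (x : ZMod 3) : ZMod 9 := (x.val : ZMod 9) ^ 3

lemma F_mul : ∀ u v : ZMod 3, F (u * v) = F u * F v := by decide

lemma cube_cast (x : ℕ) : ((x : ZMod 9)) ^ 3 = F (x : ZMod 3) := by
  have h : ∀ A B : ZMod 9, (3 * A + B) ^ 3 = B ^ 3 := by decide
  have hx : x = 3 * (x / 3) + x % 3 := (Nat.div_add_mod x 3).symm ▸ rfl
  calc ((x : ZMod 9)) ^ 3 = ((3 * (x / 3) + x % 3 : ℕ) : ZMod 9) ^ 3 := by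
        rw [← hx]
    _ = ((x % 3 : ℕ) : ZMod 9) ^ 3 := by push_cast; rw [h]
    _ = F (x : ZMod 3) := by rw [F, ZMod.val_natCast]

lemma pow_six_add_three (y : ZMod 9) (q : ℕ) : y ^ (6 * q + 3) = y ^ 3 := by
  induction q with
  | zero => rfl
  | succ q ih =>
      have h9 : ∀ y : ZMod 9, y ^ 9 = y ^ 3 := by decide
      have : 6 * (q + 1) + 3 = (6 * q + 3) + 6 := by ring
      rw [this, pow_add, ih, ← pow_add]
      exact h9 y

lemma pow_r (r : ℕ) (hr6 : r % 6 = 3) (x : ℕ) :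
    ((x : ZMod 9)) ^ r = F (x : ZMod 3) := by
  have : r = 6 * (r / 6) + 3 := by omega
  rw [this, pow_six_add_three, cube_cast]

/-- The key sum. -/
def S (n : ℕ) : ZMod 9 := ∑ k ∈ Finset.range (n + 1), F ((n.choose k : ZMod 3))

lemma apery_eq (r : ℕ) (hr6 : r % 6 = 3) (n : ℕ) : ((apery r 0 n : ℕ) : ZMod 9) = S n := by
  rw [apery, S, Nat.cast_sum]
  refine Finset.sum_congr rfl fun k _ => ?_
  rw [pow_zero, mul_one, Nat.cast_pow, pow_r r hr6]

lemma sum_three (G : ℕ → ZMod 9) (s : ℕ) :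
    ∑ k ∈ Finset.range (3 * s), G k
      = ∑ i ∈ Finset.range s, (G (3 * i) + G (3 * i + 1) + G (3 * i + 2)) := by
  induction s with
  | zero => simp
  | succ s ih =>
      have : 3 * (s + 1) = (3 * s) + 1 + 1 + 1 := by ring
      rw [this, Finset.sum_range_succ, Finset.sum_range_succ, Finset.sum_range_succ, ih,
        Finset.sum_range_succ]
      ring

instance : Fact (Nat.Prime 3) := ⟨by norm_num⟩

lemma lucas_step (a b k : ℕ) (hb : b ≤ 2) :
    F (((3 * a + b).choose k : ZMod 3)) = F ((a.choose (k / 3) : ZMod 3)) * F ((b.choose (k % 3) : ZMod 3)) := by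
  have h := Choose.choose_modEq_choose_mod_mul_choose_div_nat (n := 3 * a + b) (k := k) (p := 3)
  have hb3 : (3 * a + b) % 3 = b := by omega
  have ha3 : (3 * a + b) / 3 = a := by omega
  rw [hb3, ha3] at h
  have : (((3 * a + b).choose k : ℕ) : ZMod 3) = ((b.choose (k % 3) * a.choose (k / 3) : ℕ) : ZMod 3) := by
    rw [ZMod.natCast_eq_natCast_iff]
    exact h
  rw [this, Nat.cast_mul, F_mul, mul_comm]

/-- S recursion. -/
lemma S_step (a b : ℕ) (hb : b ≤ 2) :
    S (3 * a + b) = (if b = 1 then 2 else 1) * S a := by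
  have hzero : ∀ k ∈ Finset.range (3 * a + 3), k ∉ Finset.range (3 * a + b + 1) →
      F (((3 * a + b).choose k : ZMod 3)) = 0 := by
    intro k _ hk
    rw [Finset.mem_range, not_lt] at hk
    rw [Nat.choose_eq_zero_of_lt (by omega)]
    norm_num [F]
  have hsub : Finset.range (3 * a + b + 1) ⊆ Finset.range (3 * a + 3) := by
    apply Finset.range_subset_range.2; omega
  have h1 : S (3 * a + b) = ∑ k ∈ Finset.range (3 * a + 3), F (((3 * a + b).choose k : ZMod 3)) := by
    rw [S]; exact Finset.sum_subset hsub hzero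
  have h33 : 3 * a + 3 = 3 * (a + 1) := by ring
  rw [h1, h33, sum_three]
  have hterm : ∀ i, F (((3*a+b).choose (3*i) : ZMod 3)) + F (((3*a+b).choose (3*i+1) : ZMod 3))
      + F (((3*a+b).choose (3*i+2) : ZMod 3))
      = F ((a.choose i : ZMod 3)) * (F ((b.choose 0 : ZMod 3)) + F ((b.choose 1 : ZMod 3)) + F ((b.choose 2 : ZMod 3))) := by
    intro i
    rw [lucas_step a b _ hb, lucas_step a b _ hb, lucas_step a b _ hb]
    have e0 : (3*i) / 3 = i := by omega
    have e0' : (3*i) % 3 = 0 := by omega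
    have e1 : (3*i+1) / 3 = i := by omega
    have e1' : (3*i+1) % 3 = 1 := by omega
    have e2 : (3*i+2) / 3 = i := by omega
    have e2' : (3*i+2) % 3 = 2 := by omega
    rw [e0, e0', e1, e1', e2, e2']
    ring
  rw [Finset.sum_congr rfl (fun i _ => hterm i), ← Finset.sum_mul]
  have hg : (F ((b.choose 0 : ZMod 3)) + F ((b.choose 1 : ZMod 3)) + F ((b.choose 2 : ZMod 3)))
      = (if b = 1 then 2 else 1) := by
    interval_cases b <;> simp <;> decide
  rw [hg, S, mul_comm]

lemma S_small (b : ℕ) (hb : b ≤ 2) : S b = (if b = 1 then 2 else 1) := by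
  interval_cases b <;> simp [S] <;> decide

lemma key (m : ℕ) (d : ℕ → ℕ) (hd2 : ∀ i, d i ≤ 2) :
    S (∑ i ∈ Finset.range (m + 1), d i * 3 ^ i) = 2 ^ (digitCount d m 1) := by
  induction m generalizing d with
  | zero =>
      have e : ∑ i ∈ Finset.range (0 + 1), d i * 3 ^ i = d 0 := by
        simp
      rw [e, S_small (d 0) (hd2 0)]
      unfold digitCount
      rw [Finset.card_filter, Finset.sum_range_one]
      have h0 := hd2 0
      interval_cases hd : d 0 <;> norm_num
  | succ m ih =>
      have hsum : ∑ i ∈ Finset.range (m + 2), d i * 3 ^ i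
          = 3 * (∑ i ∈ Finset.range (m + 1), d (i + 1) * 3 ^ i) + d 0 := by
        rw [Finset.sum_range_succ' (fun i => d i * 3 ^ i) (m + 1)]
        simp only [pow_zero, mul_one, Finset.mul_sum]
        congr 1
        exact Finset.sum_congr rfl fun i _ => by ring
      rw [hsum, S_step _ _ (hd2 0), ih (fun i => d (i + 1)) (fun i => hd2 (i + 1))]
      have hcount : digitCount d (m + 1) 1
          = digitCount (fun i => d (i + 1)) m 1 + (if d 0 = 1 then 1 else 0) := by
        unfold digitCount
        rw [Finset.card_filter, Finset.card_filter,
          Finset.sum_range_succ' (fun i => if d i = 1 then 1 else 0) (m + 1)]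
      rw [hcount, pow_add]
      by_cases h : d 0 = 1 <;> simp [h] <;> ring

lemma two_pow_mod_six (t : ℕ) : (2 : ZMod 9) ^ t = 2 ^ (t % 6) := by
  conv_lhs => rw [show t = 6 * (t / 6) + t % 6 by omega]
  rw [pow_add, pow_mul, show (2 : ZMod 9) ^ 6 = 1 by decide, one_pow, one_mul]

end FranelAux

/-- Generalised Franel numbers mod 9 for `r ≡ 3 (mod 6)`. -/
theorem franel_mod_nine_r3 (r : ℕ) (hr : 0 < r) (hr6 : r % 6 = 3)
    (n m : ℕ) (d : ℕ → ℕ) (hd2 : ∀ i, d i ≤ 2) (hd0 : ∀ i, m < i → d i = 0)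
    (hn : n = ∑ i ∈ Finset.range (m + 1), d i * 3 ^ i) :
    (apery r 0 n ≡ 1 [MOD 9] ↔ digitCount d m 1 % 6 = 0) ∧
    (apery r 0 n ≡ 2 [MOD 9] ↔ digitCount d m 1 % 6 = 1) ∧
    (apery r 0 n ≡ 4 [MOD 9] ↔ digitCount d m 1 % 6 = 2) ∧
    (apery r 0 n ≡ 8 [MOD 9] ↔ digitCount d m 1 % 6 = 3) ∧
    (apery r 0 n ≡ 7 [MOD 9] ↔ digitCount d m 1 % 6 = 4) ∧
    (apery r 0 n ≡ 5 [MOD 9] ↔ digitCount d m 1 % 6 = 5) ∧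
    ¬ (apery r 0 n ≡ 3 [MOD 9]) ∧
    ¬ (apery r 0 n ≡ 6 [MOD 9]) := by
  have hA : ∀ c : ℕ,
      (apery r 0 n ≡ c [MOD 9] ↔ (2 : ZMod 9) ^ (digitCount d m 1 % 6) = (c : ZMod 9)) := by
    intro c
    rw [← ZMod.natCast_eq_natCast_iff, FranelAux.apery_eq r hr6, hn,
      FranelAux.key m d hd2, FranelAux.two_pow_mod_six]
  rw [hA 1, hA 2, hA 4, hA 8, hA 7, hA 5, hA 3, hA 6]
  have h6 : digitCount d m 1 % 6 < 6 := Nat.mod_lt _ (by norm_num)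
  revert h6
  generalize digitCount d m 1 % 6 = t
  intro h6
  interval_cases t <;> refine ⟨by decide, by decide, by decide, by decide, by decide, by decide, by decide, by decide⟩
end

section
/- Let r and s be positive integers with r \equiv 1 (mod 3), r \ge 4, and s \equiv 4 (mod 6). Then for every nonnegative integer n: a_n(r,s) \equiv 1 (mod 9) if and only if the number of digits equal to 1 in the 3-adic expansion of n is even, and a_n(r,s) \equiv 8 (mod 9) if and only if that number is odd; in particular a_n(r,s) is never \equiv 0, 2, 3, 4, 5, 6, or 7 (mod 9). -/
open Finset

namespace AP9

lemma h9 : (9 : ZMod 9) = 0 := by decide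

lemma cube (A x : ZMod 9) : (A + 3*x)^3 = A^3 := by
  linear_combination (A^2*x + 3*A*x^2 + 3*x^3) * h9

lemma pow31 (A x : ZMod 9) (a : ℕ) : (A + 3*x)^(3*a+1) = A^(3*a+1) + 3*x*A^(3*a) := by
  rw [pow_succ, pow_mul, cube, ← pow_mul, pow_succ]
  ring

lemma pow64 (A x : ZMod 9) (b : ℕ) : (A + 3*x)^(6*b+4) = A^(6*b+4) + 3*x*A^(6*b+3) := by
  have h := pow31 A x (2*b+1)
  rw [show 3*(2*b+1)+1 = 6*b+4 from by ring, show 3*(2*b+1) = 6*b+3 from by ring] at h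
  exact h

lemma two_pow_s (b : ℕ) : (2 : ZMod 9)^(6*b+4) = 7 := by
  rw [pow_add, pow_mul]
  have h1 : (2:ZMod 9)^6 = 1 := by decide
  have h2 : (2:ZMod 9)^4 = 7 := by decide
  rw [h1, h2, one_pow, one_mul]

lemma two_pow_s3 (b : ℕ) : (2 : ZMod 9)^(6*b+3) = 8 := by
  rw [pow_add, pow_mul]
  have h1 : (2:ZMod 9)^6 = 1 := by decide
  have h2 : (2:ZMod 9)^3 = 8 := by decide
  rw [h1, h2, one_pow, one_mul]

lemma pow2s (w : ZMod 9) (b : ℕ) : (2 + 3*w)^(6*b+4) = 7 + 6*w := by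
  rw [pow64, two_pow_s, two_pow_s3]
  linear_combination 2*w*h9

lemma z3pow (z : ZMod 9) (e : ℕ) (h : 2 ≤ e) : (3*z)^e = 0 := by
  obtain ⟨f, rfl⟩ : ∃ f, e = 2 + f := ⟨e - 2, by omega⟩
  rw [pow_add, mul_pow]
  have : (3:ZMod 9)^2 = 0 := by decide
  rw [this]
  ring

lemma hA (n k : ℕ) : (n+3).choose (k+3)
    = n.choose k + 3*(n.choose (k+1)) + 3*(n.choose (k+2)) + n.choose (k+3) := by
  show (n+2+1).choose (k+2+1) = _
  rw [Nat.choose_succ_succ]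
  show (n+1+1).choose (k+1+1) + (n+1+1).choose (k+2+1) = _
  rw [Nat.choose_succ_succ, Nat.choose_succ_succ]
  show n.succ.choose k.succ + (n+1).choose (k+1+1) + ((n+1).choose (k+1+1) + (n+1).choose (k+2+1)) = _
  rw [Nat.choose_succ_succ, Nat.choose_succ_succ, Nat.choose_succ_succ]
  ring

lemma hC (n : ℕ) : (n+3).choose 2 = n.choose 2 + 3*n + 3 := by
  show (n+2+1).choose (1+1) = _
  rw [Nat.choose_succ_succ]
  show (n+1+1).choose (0+1) + (n+1+1).choose (1+1) = _
  rw [Nat.choose_succ_succ, Nat.choose_succ_succ]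
  show (n+1+1).choose 0 + (n+1).choose 1 + ((n+1).choose (0+1) + (n+1).choose (1+1)) = _
  rw [Nat.choose_succ_succ, Nat.choose_succ_succ]
  simp [Nat.choose_one_right]
  ring

lemma T (q : ℕ) : ∀ j : ℕ,
    ((3*q).choose (3*j) : ZMod 9) = q.choose j ∧
    ((3*q).choose (3*j+1) : ZMod 9) = 3*q*((q-1).choose j) ∧
    ((3*q).choose (3*j+2) : ZMod 9) = 3*q*((q-1).choose j) := by
  induction q with
  | zero =>
    intro j
    rcases Nat.eq_zero_or_pos j with rfl | hj
    · norm_num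
    · have h1 : (0:ℕ).choose (3*j) = 0 := Nat.choose_eq_zero_of_lt (by omega)
      have h2 : (0:ℕ).choose (3*j+1) = 0 := Nat.choose_eq_zero_of_lt (by omega)
      have h3 : (0:ℕ).choose (3*j+2) = 0 := Nat.choose_eq_zero_of_lt (by omega)
      have h4 : (0:ℕ).choose j = 0 := Nat.choose_eq_zero_of_lt (by omega)
      simp [h1, h2, h3, h4]
  | succ p ih =>
    intro j
    have e3 : 3*(p+1) = 3*p + 3 := by ring
    refine ⟨?_, ?_, ?_⟩
    · rcases j with _ | j'
      · simp
      · have e : 3*(j'+1) = (3*j') + 3 := by ring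
        rw [e3, e, hA]
        push_cast
        have e4 : 3*j'+3 = 3*(j'+1) := by ring
        rw [e4, (ih j').1, (ih j').2.1, (ih j').2.2, (ih (j'+1)).1]
        have pas : ((p+1).choose (j'+1) : ZMod 9) = p.choose j' + p.choose (j'+1) := by
          rw [Nat.choose_succ_succ]; push_cast; ring
        rw [pas]
        linear_combination (2*(p:ZMod 9)*((p-1).choose j' : ZMod 9)) * h9
    · rcases j with _ | j'
      · simp [e3, Nat.choose_one_right]
        push_cast; ring
      · have e : 3*(j'+1)+1 = (3*j'+1) + 3 := by ring
        rw [e3, e, hA]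
        push_cast
        have e1 : 3*j'+1+1 = 3*j'+2 := by ring
        have e2 : 3*j'+1+2 = 3*(j'+1) := by ring
        have e3' : 3*j'+1+3 = 3*(j'+1)+1 := by ring
        rw [e1, e2, e3', (ih j').2.1, (ih j').2.2, (ih (j'+1)).1, (ih (j'+1)).2.1]
        rcases p with _ | p'
        · norm_num
        · have pas : ((p'+1).choose (j'+1) : ZMod 9)
              = p'.choose j' + p'.choose (j'+1) := by
            rw [Nat.choose_succ_succ]; push_cast; ring
          rw [pas]
          push_cast
          linear_combination ((p':ZMod 9)+1)*((p'.choose j' : ZMod 9)) * h9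
    · rcases j with _ | j'
      · rw [e3, hC]
        push_cast
        rw [(ih 0).2.2]
        simp only [Nat.choose_zero_right, Nat.cast_one, mul_one]
        linear_combination (p:ZMod 9) * h9
      · have e : 3*(j'+1)+2 = (3*j'+2) + 3 := by ring
        rw [e3, e, hA]
        push_cast
        have e1 : 3*j'+2+1 = 3*(j'+1) := by ring
        have e2 : 3*j'+2+2 = 3*(j'+1)+1 := by ring
        have e3' : 3*j'+2+3 = 3*(j'+1)+2 := by ring
        rw [e1, e2, e3', (ih j').2.2, (ih (j'+1)).1, (ih (j'+1)).2.1, (ih (j'+1)).2.2]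
        rcases p with _ | p'
        · norm_num
        · have pas : ((p'+1).choose (j'+1) : ZMod 9)
              = p'.choose j' + p'.choose (j'+1) := by
            rw [Nat.choose_succ_succ]; push_cast; ring
          rw [pas]
          push_cast
          linear_combination ((p':ZMod 9)+1)*((p'.choose (j'+1) : ZMod 9)) * h9

lemma pascal (n k : ℕ) : ((n+1).choose (k+1) : ZMod 9) = n.choose k + n.choose (k+1) := by
  rw [Nat.choose_succ_succ]; push_cast; ring

lemma U10s (q j : ℕ) : ((3*q+1).choose (3*(j+1)) : ZMod 9)
    = (q.choose (j+1) : ZMod 9) + 3*q*((q-1).choose j) := by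
  have e : 3*(j+1) = (3*j+2)+1 := by ring
  rw [e, pascal]
  have e2 : 3*j+2+1 = 3*(j+1) := by ring
  rw [e2, (T q j).2.2, (T q (j+1)).1]; ring

lemma U11 (q j : ℕ) : ((3*q+1).choose (3*j+1) : ZMod 9)
    = (q.choose j : ZMod 9) + 3*q*((q-1).choose j) := by
  rw [(show 3*j+1 = (3*j)+1 from rfl), pascal, (T q j).1, (T q j).2.1]

lemma U12 (q j : ℕ) : ((3*q+1).choose (3*j+2) : ZMod 9)
    = 3*(2*q*((q-1).choose j)) := by
  rw [(show 3*j+2 = (3*j+1)+1 from rfl), pascal, (T q j).2.1, (T q j).2.2]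
  ring

lemma U20 (q j : ℕ) : ((3*q+2).choose (3*j) : ZMod 9) = q.choose j := by
  rcases j with _ | j'
  · simp
  · have e : (3:ℕ)*q+2 = (3*q+1)+1 := rfl
    have e2 : 3*(j'+1) = (3*j'+2)+1 := by ring
    rw [e, e2, pascal, ← e2, U12, U10s]
    linear_combination ((q:ZMod 9) * ((q-1).choose j' : ZMod 9)) * h9

lemma U21 (q j : ℕ) : ((3*q+2).choose (3*j+1) : ZMod 9) = (2+3*q) * (q.choose j) := by
  have e : (3:ℕ)*q+2 = (3*q+1)+1 := rfl
  have e2 : 3*j+1 = (3*j)+1 := rfl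
  rw [e, e2, pascal, U11]
  rcases j with _ | j'
  · simp
    ring
  · rw [(show 3*(j'+1) = 3*(j'+1) from rfl), U10s]
    rcases q with _ | p
    · norm_num
    · have pas : ((p+1-1).choose (j'+1) : ZMod 9) = (p+1).choose (j'+1) - (p.choose j' : ZMod 9) := by
        rw [Nat.add_sub_cancel, Nat.choose_succ_succ (n := p) (k := j')]
        push_cast; ring
      rw [pas]
      push_cast
      ring

lemma U22 (q j : ℕ) : ((3*q+2).choose (3*j+2) : ZMod 9) = q.choose j := by
  have e : (3:ℕ)*q+2 = (3*q+1)+1 := rfl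
  have e2 : 3*j+2 = (3*j+1)+1 := rfl
  rw [e, e2, pascal, U11, ← e2, U12]
  linear_combination ((q:ZMod 9) * ((q-1).choose j : ZMod 9)) * h9

lemma apery_cast (r s n : ℕ) : ((apery r s n : ℕ) : ZMod 9)
    = ∑ k ∈ range (n+1), ((n.choose k : ZMod 9))^r * (((n+k).choose k : ZMod 9))^s := by
  unfold apery
  push_cast
  rfl

lemma sum3 (f : ℕ → ZMod 9) (m : ℕ) :
    ∑ k ∈ range (3*m), f k = ∑ j ∈ range m, (f (3*j) + f (3*j+1) + f (3*j+2)) := by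
  induction m with
  | zero => simp
  | succ p ih =>
    rw [show 3*(p+1) = (3*p+1+1)+1 from by ring, sum_range_succ, sum_range_succ,
      sum_range_succ, ih, sum_range_succ]
    have e1 : 3*p+1+1 = 3*p+2 := rfl
    rw [e1]; ring

lemma relq (q j : ℕ) : (q:ZMod 9)*((q-1).choose j : ZMod 9) + (q:ZMod 9)*((q-1).choose (j+1) : ZMod 9)
    = (q:ZMod 9)*(q.choose (j+1) : ZMod 9) := by
  rcases q with _ | p
  · norm_num
  · rw [Nat.add_sub_cancel, Nat.choose_succ_succ (n := p) (k := j)]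
    push_cast
    ring

lemma rely (q j : ℕ) : ((q+j+1 : ℕ):ZMod 9) * ((q+j).choose j : ZMod 9)
    = ((j+1:ℕ):ZMod 9) * ((q+j+1).choose (j+1) : ZMod 9) := by
  have h := Nat.add_one_mul_choose_eq (q+j) j
  have h2 : (q+j+1) * ((q+j).choose j) = ((q+j+1).choose (j+1)) * (j+1) := h
  calc ((q+j+1 : ℕ):ZMod 9) * ((q+j).choose j : ZMod 9)
      = (((q+j+1) * ((q+j).choose j) : ℕ) : ZMod 9) := by push_cast; ring
    _ = ((((q+j+1).choose (j+1)) * (j+1) : ℕ) : ZMod 9) := by rw [h2]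
    _ = _ := by push_cast; ring


lemma ap0 (r s q : ℕ) (hr : 2 ≤ r) (hs : 2 ≤ s) :
    ((apery r s (3*q) : ℕ) : ZMod 9) = ((apery r s q : ℕ) : ZMod 9) := by
  rw [apery_cast, apery_cast]
  have key : ∑ k ∈ range (3*(q+1)), ((3*q).choose k : ZMod 9)^r * (((3*q+k).choose k : ZMod 9))^s
      = ∑ k ∈ range (3*q+1), ((3*q).choose k : ZMod 9)^r * (((3*q+k).choose k : ZMod 9))^s := by
    rw [show 3*(q+1) = (3*q+1)+1+1 from by ring, sum_range_succ, sum_range_succ]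
    rw [Nat.choose_eq_zero_of_lt (show 3*q < 3*q+1+1 by omega),
      Nat.choose_eq_zero_of_lt (show 3*q < 3*q+1 by omega)]
    simp [zero_pow (show r ≠ 0 by omega)]
  rw [← key, sum3]
  refine Finset.sum_congr rfl fun j hj => ?_
  rw [(T q j).1, (show 3*q+3*j = 3*(q+j) from by ring), (T (q+j) j).1]
  rw [(T q j).2.1, (T q j).2.2, mul_assoc, z3pow _ r hr]
  ring

lemma ap2 (r s q : ℕ) (hr : 2 ≤ r) (hs : 2 ≤ s) :
    ((apery r s (3*q+2) : ℕ) : ZMod 9) = ((apery r s q : ℕ) : ZMod 9) := by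
  rw [apery_cast, apery_cast]
  rw [show 3*q+2+1 = 3*(q+1) from by ring, sum3]
  refine Finset.sum_congr rfl fun j hj => ?_
  rw [U20 q j, (show 3*q+2+3*j = 3*(q+j)+2 from by ring), U20 (q+j) j]
  rw [(show 3*q+2+(3*j+1) = 3*(q+j+1) from by ring), (T (q+j+1) j).2.1, mul_assoc,
    z3pow _ s hs]
  rw [(show 3*q+2+(3*j+2) = 3*(q+j+1)+1 from by ring), U12 (q+j+1) j, z3pow _ s hs]
  ring

lemma ap1 (r s q : ℕ) (hr3 : r % 3 = 1) (hr4 : 4 ≤ r) (hs6 : s % 6 = 4) :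
    ((apery r s (3*q+1) : ℕ) : ZMod 9) = 8 * ((apery r s q : ℕ) : ZMod 9) := by
  obtain ⟨a, rfl⟩ : ∃ a, r = 3*a+1 := ⟨(r-1)/3, by omega⟩
  obtain ⟨b, rfl⟩ : ∃ b, s = 6*b+4 := ⟨(s-4)/6, by omega⟩
  rw [apery_cast, apery_cast, Finset.mul_sum]
  have key : ∑ k ∈ range (3*(q+1)),
        ((3*q+1).choose k : ZMod 9)^(3*a+1) * (((3*q+1+k).choose k : ZMod 9))^(6*b+4)
      = ∑ k ∈ range (3*q+1+1),
        ((3*q+1).choose k : ZMod 9)^(3*a+1) * (((3*q+1+k).choose k : ZMod 9))^(6*b+4) := by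
    rw [show 3*(q+1) = (3*q+1+1)+1 from by ring, sum_range_succ]
    rw [Nat.choose_eq_zero_of_lt (show 3*q+1 < 3*q+1+1 by omega)]
    simp [zero_pow (show 3*a+1 ≠ 0 by omega)]
  rw [← key, sum3]
  refine Finset.sum_congr rfl fun j hj => ?_
  -- the k = 3j+2 term dies
  rw [U12 q j, z3pow _ (3*a+1) (by omega)]
  rcases j with _ | j'
  · -- j = 0
    norm_num
    rw [show ((3:ZMod 9)*q+1) = 1 + 3*(q:ZMod 9) from by ring, pow31,
      show ((1:ZMod 9) + 3*(q:ZMod 9) + 1) = 2 + 3*(q:ZMod 9) from by ring, pow2s]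
    simp only [one_pow, mul_one]
    linear_combination ((3:ZMod 9)*q + 2*(q:ZMod 9)^2) * h9
  · -- j = j'+1
    rw [show q + (j'+1) = q + j' + 1 from rfl]
    have hA1 : ((3*q+1).choose (3*(j'+1)) : ZMod 9)
        = (q.choose (j'+1) : ZMod 9) + 3*((q:ZMod 9)*((q-1).choose j')) := by
      rw [U10s]; ring
    have hB1 : ((3*q+1+3*(j'+1)).choose (3*(j'+1)) : ZMod 9)
        = ((q+j'+1).choose (j'+1) : ZMod 9)
          + 3*((((q:ZMod 9)+(j':ZMod 9)+1))*((q+j').choose j' : ZMod 9)) := by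
      rw [show 3*q+1+3*(j'+1) = 3*(q+j'+1)+1 from by ring, U10s]
      rw [show q+j'+1-1 = q+j' from rfl]
      push_cast
      ring
    have hA2 : ((3*q+1).choose (3*(j'+1)+1) : ZMod 9)
        = (q.choose (j'+1) : ZMod 9) + 3*((q:ZMod 9)*((q-1).choose (j'+1))) := by
      rw [U11]; ring
    have hB2 : ((3*q+1+(3*(j'+1)+1)).choose (3*(j'+1)+1) : ZMod 9)
        = (2 + 3*((q:ZMod 9)+(j':ZMod 9)+1)) * ((q+j'+1).choose (j'+1) : ZMod 9) := by
      rw [show 3*q+1+(3*(j'+1)+1) = 3*(q+j'+1)+2 from by ring, U21]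
      push_cast
      ring
    rw [hA1, hB1, hA2, hB2, pow31, pow64, mul_pow, pow2s, pow31]
    have hry := rely q j'
    have hrq := relq q j'
    push_cast at hry
    -- linear_combination time
    linear_combination
      (3 * ((q.choose (j'+1) : ZMod 9))^(3*a+1) * (((q+j'+1).choose (j'+1) : ZMod 9))^(6*b+3)) * hry
      + (3 * ((q.choose (j'+1) : ZMod 9))^(3*a) * (((q+j'+1).choose (j'+1) : ZMod 9))^(6*b+4)) * hrq
      + ((((q:ZMod 9)+(j':ZMod 9)+1)) * ((q.choose (j'+1) : ZMod 9))^(3*a+1) * (((q+j'+1).choose (j'+1) : ZMod 9))^(6*b+4)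
        + 2*(q:ZMod 9)*((q-1).choose (j'+1) : ZMod 9)*((q.choose (j'+1) : ZMod 9))^(3*a)*(((q+j'+1).choose (j'+1) : ZMod 9))^(6*b+4)
        + (q:ZMod 9)*((q-1).choose j' : ZMod 9)*(((q:ZMod 9)+(j':ZMod 9)+1))*((q+j').choose j' : ZMod 9)*((q.choose (j'+1) : ZMod 9))^(3*a)*(((q+j'+1).choose (j'+1) : ZMod 9))^(6*b+3)
        + 2*(((q:ZMod 9)+(j':ZMod 9)+1))*(q:ZMod 9)*((q-1).choose (j'+1) : ZMod 9)*((q.choose (j'+1) : ZMod 9))^(3*a)*(((q+j'+1).choose (j'+1) : ZMod 9))^(6*b+4)) * h9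


lemma ap_zero (r s : ℕ) : ((apery r s 0 : ℕ) : ZMod 9) = 1 := by
  simp [apery]

lemma ap_one (r s : ℕ) (hs6 : s % 6 = 4) : ((apery r s 1 : ℕ) : ZMod 9) = -1 := by
  obtain ⟨b, rfl⟩ : ∃ b, s = 6*b+4 := ⟨(s-4)/6, by omega⟩
  have h : apery r (6*b+4) 1 = 1 + 2^(6*b+4) := by
    simp [apery, Finset.sum_range_succ]
  rw [h]
  push_cast
  rw [two_pow_s]
  decide

lemma ap_two (r s : ℕ) (hr : 2 ≤ r) (hs : 2 ≤ s) : ((apery r s 2 : ℕ) : ZMod 9) = 1 := by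
  have h : apery r s 2 = 1 + 2^r*3^s + 6^s := by
    simp [apery, Finset.sum_range_succ]
    norm_num [Nat.choose]
  rw [h]
  push_cast
  have h3 : ((3:ZMod 9))^s = 0 := by
    have := z3pow 1 s hs
    simpa using this
  have h6 : ((6:ZMod 9))^s = 0 := by
    have := z3pow 2 s hs
    norm_num at this
    exact this
  rw [h3, h6]
  ring

lemma key (r s : ℕ) (hr3 : r % 3 = 1) (hr4 : 4 ≤ r) (hs6 : s % 6 = 4) :
    ∀ m, ∀ d : ℕ → ℕ, (∀ i, d i ≤ 2) →
    ((apery r s (∑ i ∈ range (m+1), d i * 3^i) : ℕ) : ZMod 9)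
      = (-1)^(digitCount d m 1) := by
  intro m
  induction m with
  | zero =>
    intro d hd
    have hs0 : ∑ i ∈ range (0+1), d i * 3^i = d 0 := by simp
    rw [hs0]
    have hcard : digitCount d 0 1 = if d 0 = 1 then 1 else 0 := by
      unfold digitCount
      rw [Finset.range_one, Finset.filter_singleton]
      split <;> simp
    rw [hcard]
    have hd0 : d 0 = 0 ∨ d 0 = 1 ∨ d 0 = 2 := by have := hd 0; omega
    rcases hd0 with h|h|h <;> rw [h]
    · rw [ap_zero]; norm_num
    · rw [ap_one r s hs6]; norm_num
    · rw [ap_two r s (by omega) (by omega)]; norm_num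
  | succ m ihm =>
    intro d hd
    have hsum : ∑ i ∈ range (m+1+1), d i * 3^i
        = 3*(∑ i ∈ range (m+1), d (i+1) * 3^i) + d 0 := by
      rw [Finset.sum_range_succ']
      rw [Finset.mul_sum]
      simp only [pow_zero, mul_one]
      congr 1
      refine Finset.sum_congr rfl fun i _ => ?_
      ring
    have hcard : digitCount d (m+1) 1
        = (if d 0 = 1 then 1 else 0) + digitCount (fun i => d (i+1)) m 1 := by
      unfold digitCount
      rw [Finset.card_filter, Finset.card_filter, Finset.sum_range_succ']
      rw [Nat.add_comm]
    have hq := ihm (fun i => d (i+1)) (fun i => hd (i+1))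
    rw [hsum, hcard]
    have hd0 : d 0 = 0 ∨ d 0 = 1 ∨ d 0 = 2 := by have := hd 0; omega
    rcases hd0 with h|h|h <;> rw [h]
    · rw [Nat.add_zero, ap0 r s _ (by omega) (by omega), hq]
      norm_num
    · rw [ap1 r s _ hr3 hr4 hs6, hq]
      have h8 : (8 : ZMod 9) = -1 := by decide
      rw [h8]
      norm_num [pow_add]
    · rw [ap2 r s _ (by omega) (by omega), hq]
      norm_num

end AP9

/-- Apéry numbers mod 9 for `r ≡ 1 (mod 3)`, `r ≥ 4`, `s ≡ 4 (mod 6)`. -/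
theorem apery_mod_nine_r1_s4 (r s : ℕ) (hr : 0 < r) (hs : 0 < s)
    (hr3 : r % 3 = 1) (hr4 : 4 ≤ r) (hs6 : s % 6 = 4)
    (n m : ℕ) (d : ℕ → ℕ) (hd2 : ∀ i, d i ≤ 2) (hd0 : ∀ i, m < i → d i = 0)
    (hn : n = ∑ i ∈ Finset.range (m + 1), d i * 3 ^ i) :
    (apery r s n ≡ 1 [MOD 9] ↔ Even (digitCount d m 1)) ∧
    (apery r s n ≡ 8 [MOD 9] ↔ Odd (digitCount d m 1)) ∧
    ¬ (apery r s n ≡ 0 [MOD 9]) ∧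
    ¬ (apery r s n ≡ 2 [MOD 9]) ∧
    ¬ (apery r s n ≡ 3 [MOD 9]) ∧
    ¬ (apery r s n ≡ 4 [MOD 9]) ∧
    ¬ (apery r s n ≡ 5 [MOD 9]) ∧
    ¬ (apery r s n ≡ 6 [MOD 9]) ∧
    ¬ (apery r s n ≡ 7 [MOD 9]) := by
  have hk : ((apery r s n : ℕ) : ZMod 9) = (-1)^(digitCount d m 1) := by
    rw [hn]
    exact AP9.key r s hr3 hr4 hs6 m d hd2
  rcases Nat.even_or_odd (digitCount d m 1) with he | ho
  · have hv : ((apery r s n : ℕ) : ZMod 9) = 1 := by rw [hk, he.neg_one_pow]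
    have h1 : apery r s n ≡ 1 [MOD 9] :=
      (ZMod.natCast_eq_natCast_iff _ _ _).mp (by rw [hv]; norm_num)
    have hno : ∀ t : ℕ, ((1:ZMod 9) ≠ (t:ZMod 9)) → ¬ (apery r s n ≡ t [MOD 9]) :=
      fun t h hc => h (by rw [← hv]; exact (ZMod.natCast_eq_natCast_iff _ _ _).mpr hc)
    exact ⟨iff_of_true h1 he,
      iff_of_false (hno 8 (by decide)) (Nat.not_odd_iff_even.mpr he),
      hno 0 (by decide), hno 2 (by decide), hno 3 (by decide), hno 4 (by decide),
      hno 5 (by decide), hno 6 (by decide), hno 7 (by decide)⟩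
  · have hv : ((apery r s n : ℕ) : ZMod 9) = -1 := by rw [hk, ho.neg_one_pow]
    have h8 : apery r s n ≡ 8 [MOD 9] :=
      (ZMod.natCast_eq_natCast_iff _ _ _).mp (by rw [hv]; decide)
    have hno : ∀ t : ℕ, ((-1:ZMod 9) ≠ (t:ZMod 9)) → ¬ (apery r s n ≡ t [MOD 9]) :=
      fun t h hc => h (by rw [← hv]; exact (ZMod.natCast_eq_natCast_iff _ _ _).mpr hc)
    exact ⟨iff_of_false (hno 1 (by decide)) (Nat.not_even_iff_odd.mpr ho),
      iff_of_true h8 ho,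
      hno 0 (by decide), hno 2 (by decide), hno 3 (by decide), hno 4 (by decide),
      hno 5 (by decide), hno 6 (by decide), hno 7 (by decide)⟩
end

section
/- Let r and s be positive integers such that either (r \equiv 1 (mod 6), s \equiv 1 (mod 6), r \ge 7, and s \ge 7) or (r \equiv 4 (mod 6) and s \equiv 1 (mod 6)). Then for every nonnegative integer n: (i) a_n(r,s) \equiv 1 (mod 9) iff every digit of n is 0 or 2; (ii) a_n(r,s) \equiv 3 (mod 9) iff exactly one digit of n equals 1, this digit is not part of an occurrence of the string 11, and all other digits are 0 or 2; (iii) a_n(r,s) \equiv 6 (mod 9) iff the 3-adic expansion of n has exactly one occurrence of the string 11 and all digits of n not belonging to this occurrence are 0 or 2; (iv) in all other cases 9 divides a_n(r,s); in particular a_n(r,s) is never \equiv 2, 4, 5, 7, or 8 (mod 9). -/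
open Finset

open Nat Finset

/-- statement bundle for the base case of the digit-induction -/
def E0 (a : ℕ) : Prop := ∀ b : ℕ,
  (3*a).choose (3*b) ≡ a.choose b [MOD 9] ∧
  (3*a).choose (3*b+1) ≡ 3*(a-b) * a.choose b [MOD 9] ∧
  (3*a).choose (3*b+2) ≡ 3*(a-b) * a.choose b [MOD 9]

lemma E0_zero : E0 0 := by
  intro b
  rcases Nat.eq_zero_or_pos b with rfl | hb
  · simp [Nat.ModEq]
  · have h0 : ∀ q, 0 < q → Nat.choose 0 q = 0 := fun q hq => Nat.choose_eq_zero_of_lt hq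
    rw [show (3*0 = 0) from rfl]
    rw [h0 (3*b) (by omega), h0 (3*b+1) (by omega), h0 (3*b+2) (by omega),
        Nat.choose_eq_zero_of_lt hb]
    simp [Nat.ModEq]

-- Pascal step helper:  C(m+1, q+1) = C(m,q) + C(m,q+1)
lemma pascal (m q : ℕ) : (m+1).choose (q+1) = m.choose q + m.choose (q+1) :=
  Nat.choose_succ_succ m q

lemma E1 {a : ℕ} (h : E0 a) : ∀ b : ℕ,
    (3*a+1).choose (3*b) ≡ (1+3*b) * a.choose b [MOD 9] ∧
    (3*a+1).choose (3*b+1) ≡ (1+3*(a-b)) * a.choose b [MOD 9] ∧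
    (3*a+1).choose (3*b+2) ≡ 6*(a-b) * a.choose b [MOD 9] := by
  intro b
  refine ⟨?_, ?_, ?_⟩
  · rcases Nat.eq_zero_or_pos b with rfl | hb
    · simp [Nat.ModEq]
    · obtain ⟨b', rfl⟩ : ∃ b', b = b' + 1 := ⟨b-1, by omega⟩
      have e : 3*(b'+1) = (3*b'+2)+1 := by ring
      rw [e, pascal]
      have h1 := (h b').2.2
      have h2 : (3*a).choose (3*b'+2+1) ≡ a.choose (b'+1) [MOD 9] := by
        have := (h (b'+1)).1; rwa [show 3*(b'+1) = 3*b'+2+1 by ring] at this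
      have key : 3*(a-b') * a.choose b' ≡ 3*(b'+1) * a.choose (b'+1) [MOD 9] := by
        have : a.choose (b'+1) * (b'+1) = a.choose b' * (a - b') := Nat.choose_succ_right_eq a b'
        have e2 : 3*(a-b') * a.choose b' = 3 * (a.choose b' * (a-b')) := by ring
        have e3 : 3*(b'+1) * a.choose (b'+1) = 3 * (a.choose (b'+1) * (b'+1)) := by ring
        rw [e2, e3, this]
      calc (3*a).choose (3*b'+2) + (3*a).choose (3*b'+2+1)
          ≡ 3*(a-b') * a.choose b' + a.choose (b'+1) [MOD 9] := h1.add h2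
        _ ≡ 3*(b'+1) * a.choose (b'+1) + a.choose (b'+1) [MOD 9] := key.add_right _
        _ = (1+3*(b'+1)) * a.choose (b'+1) := by ring
  · rw [show 3*b+1 = 3*b+1 from rfl, pascal]
    have := ((h b).1).add (h b).2.1
    calc (3*a).choose (3*b) + (3*a).choose (3*b+1)
        ≡ a.choose b + 3*(a-b) * a.choose b [MOD 9] := ((h b).1).add (h b).2.1
      _ = (1+3*(a-b)) * a.choose b := by ring
  · rw [show 3*b+2 = (3*b+1)+1 from rfl, pascal]
    calc (3*a).choose (3*b+1) + (3*a).choose (3*b+2)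
        ≡ 3*(a-b) * a.choose b + 3*(a-b) * a.choose b [MOD 9] := ((h b).2.1).add (h b).2.2
      _ = 6*(a-b) * a.choose b := by ring

lemma E2 {a : ℕ} (h : E0 a) : ∀ b : ℕ,
    (3*a+2).choose (3*b) ≡ a.choose b [MOD 9] ∧
    (3*a+2).choose (3*b+1) ≡ (2+3*a) * a.choose b [MOD 9] ∧
    (3*a+2).choose (3*b+2) ≡ a.choose b [MOD 9] := by
  intro b
  have h1 := E1 h
  refine ⟨?_, ?_, ?_⟩
  · rcases Nat.eq_zero_or_pos b with rfl | hb
    · simp [Nat.ModEq]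
    · obtain ⟨b', rfl⟩ : ∃ b', b = b' + 1 := ⟨b-1, by omega⟩
      rw [show 3*(b'+1) = (3*b'+2)+1 by ring, show 3*a+2 = (3*a+1)+1 from rfl, pascal]
      have ha := (h1 b').2.2
      have hb2 : (3*a+1).choose (3*b'+2+1) ≡ (1+3*(b'+1)) * a.choose (b'+1) [MOD 9] := by
        have := (h1 (b'+1)).1; rwa [show 3*(b'+1) = 3*b'+2+1 by ring] at this
      have key : 6*(a-b') * a.choose b' = 6*(b'+1) * a.choose (b'+1) := by
        have e := Nat.choose_succ_right_eq a b'
        calc 6*(a-b') * a.choose b' = 6 * (a.choose b' * (a-b')) := by ring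
          _ = 6 * (a.choose (b'+1) * (b'+1)) := by rw [e]
          _ = 6*(b'+1) * a.choose (b'+1) := by ring
      calc (3*a+1).choose (3*b'+2) + (3*a+1).choose (3*b'+2+1)
          ≡ 6*(a-b') * a.choose b' + (1+3*(b'+1)) * a.choose (b'+1) [MOD 9] := ha.add hb2
        _ = a.choose (b'+1) + 9*((b'+1) * a.choose (b'+1)) := by rw [key]; ring
        _ ≡ a.choose (b'+1) + 0 [MOD 9] := Nat.ModEq.add_left _ (Nat.modEq_zero_iff_dvd.2 ⟨_, rfl⟩)
        _ = a.choose (b'+1) := by ring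
  · rw [show 3*a+2 = (3*a+1)+1 from rfl, show 3*b+1 = 3*b+1 from rfl, pascal]
    have := ((h1 b).1).add (h1 b).2.1
    have e : (1+3*b) * a.choose b + (1+3*(a-b)) * a.choose b = (2+3*b+3*(a-b)) * a.choose b := by ring
    rw [e] at this
    refine this.trans ?_
    rcases le_or_gt b a with hba | hba
    · have : 2+3*b+3*(a-b) = 2+3*a := by omega
      rw [this]
    · rw [Nat.choose_eq_zero_of_lt hba, Nat.mul_zero, Nat.mul_zero]
  · rw [show 3*a+2 = (3*a+1)+1 from rfl, show 3*b+2 = (3*b+1)+1 from rfl, pascal]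
    calc (3*a+1).choose (3*b+1) + (3*a+1).choose (3*b+1+1)
        ≡ (1+3*(a-b)) * a.choose b + 6*(a-b) * a.choose b [MOD 9] := ((h1 b).2.1).add (h1 b).2.2
      _ = a.choose b + 9*((a-b) * a.choose b) := by ring
      _ ≡ a.choose b + 0 [MOD 9] := Nat.ModEq.add_left _ (Nat.modEq_zero_iff_dvd.2 ⟨_, rfl⟩)
      _ = a.choose b := by ring

lemma absorb (a b : ℕ) : (a+1) * a.choose b = ((a+1)-b) * (a+1).choose b := by
  rcases le_or_gt b (a+1) with hba | hba
  · have h1 := Nat.add_one_mul_choose_eq a b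
    have h2 := Nat.choose_succ_right_eq (a+1) b
    calc (a+1) * a.choose b = (a+1).choose (b+1) * (b+1) := by
          rw [← h1]
      _ = (a+1).choose b * ((a+1) - b) := h2
      _ = ((a+1)-b) * (a+1).choose b := by ring
  · rw [Nat.choose_eq_zero_of_lt (by omega), Nat.choose_eq_zero_of_lt hba]; ring

lemma E0_succ {a : ℕ} (h : E0 a) : E0 (a+1) := by
  intro b
  have h2 := E2 h
  refine ⟨?_, ?_, ?_⟩
  · rcases Nat.eq_zero_or_pos b with rfl | hb
    · simp [Nat.ModEq]
    · obtain ⟨b', rfl⟩ : ∃ b', b = b' + 1 := ⟨b-1, by omega⟩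
      rw [show 3*(a+1) = (3*a+2)+1 by ring, show 3*(b'+1) = (3*b'+2)+1 by ring, pascal]
      have hsec : (3*a+2).choose (3*b'+2+1) ≡ a.choose (b'+1) [MOD 9] := by
        have := (h2 (b'+1)).1; rwa [show 3*(b'+1) = 3*b'+2+1 by ring] at this
      calc (3*a+2).choose (3*b'+2) + (3*a+2).choose (3*b'+2+1)
          ≡ a.choose b' + a.choose (b'+1) [MOD 9] := ((h2 b').2.2).add hsec
        _ = (a+1).choose (b'+1) := (Nat.choose_succ_succ a b').symm
  · rw [show 3*(a+1) = (3*a+2)+1 by ring, show 3*b+1 = 3*b+1 from rfl, pascal]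
    calc (3*a+2).choose (3*b) + (3*a+2).choose (3*b+1)
        ≡ a.choose b + (2+3*a) * a.choose b [MOD 9] := ((h2 b).1).add (h2 b).2.1
      _ = 3 * ((a+1) * a.choose b) := by ring
      _ = 3 * (((a+1)-b) * (a+1).choose b) := by rw [absorb]
      _ = 3*((a+1)-b) * (a+1).choose b := by ring
  · rw [show 3*(a+1) = (3*a+2)+1 by ring, show 3*b+2 = (3*b+1)+1 from rfl, pascal]
    calc (3*a+2).choose (3*b+1) + (3*a+2).choose (3*b+1+1)
        ≡ (2+3*a) * a.choose b + a.choose b [MOD 9] := ((h2 b).2.1).add (h2 b).2.2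
      _ = 3 * ((a+1) * a.choose b) := by ring
      _ = 3 * (((a+1)-b) * (a+1).choose b) := by rw [absorb]
      _ = 3*((a+1)-b) * (a+1).choose b := by ring

lemma E0_all : ∀ a, E0 a := fun a => Nat.rec E0_zero (fun _ ih => E0_succ ih) a

lemma mod9_3pow (x : ℕ) {t : ℕ} (ht : 2 ≤ t) : (3*x)^t ≡ 0 [MOD 9] := by
  obtain ⟨u, rfl⟩ : ∃ u, t = u + 2 := ⟨t-2, by omega⟩
  exact Nat.modEq_zero_iff_dvd.2 ⟨(3*x)^u * x^2, by ring⟩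

lemma pow13 (u : ℕ) : ∀ t, (1+3*u)^t ≡ 1+3*(t*u) [MOD 9] := by
  intro t
  induction t with
  | zero => simp [Nat.ModEq]
  | succ t ih =>
    have h1 : (1+3*u)^(t+1) = (1+3*u)^t * (1+3*u) := by ring
    rw [h1]
    calc (1+3*u)^t * (1+3*u) ≡ (1+3*(t*u)) * (1+3*u) [MOD 9] := ih.mul_right _
      _ = 1+3*((t+1)*u) + 9*(t*u*u) := by ring
      _ ≡ 1+3*((t+1)*u) + 0 [MOD 9] := Nat.ModEq.add_left _ (Nat.modEq_zero_iff_dvd.2 ⟨_, rfl⟩)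
      _ = 1+3*((t+1)*u) := by ring

lemma pow23 (v : ℕ) : ∀ t, (2+3*v)^(t+1) ≡ 2^(t+1) + 3*((t+1)*v*2^t) [MOD 9] := by
  intro t
  induction t with
  | zero => have : 2^(0+1) + 3*((0+1)*v*2^0) = 2+3*v := by ring
            rw [this, pow_one]
  | succ t ih =>
    have h1 : (2+3*v)^(t+2) = (2+3*v)^(t+1) * (2+3*v) := by ring
    rw [h1]
    calc (2+3*v)^(t+1) * (2+3*v) ≡ (2^(t+1) + 3*((t+1)*v*2^t)) * (2+3*v) [MOD 9] := ih.mul_right _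
      _ = 2^(t+2) + 3*((t+2)*v*2^(t+1)) + 9*((t+1)*v*2^t*v) := by ring
      _ ≡ 2^(t+2) + 3*((t+2)*v*2^(t+1)) + 0 [MOD 9] :=
          Nat.ModEq.add_left _ (Nat.modEq_zero_iff_dvd.2 ⟨_, rfl⟩)
      _ = 2^(t+2) + 3*((t+2)*v*2^(t+1)) := by ring

lemma three_mul_mod9 {u v : ℕ} (h : u ≡ v [MOD 3]) : 3*u ≡ 3*v [MOD 9] := by
  have := Nat.ModEq.mul_left' (c := 3) h
  simpa using this

lemma two_pow_even_mod3 (t : ℕ) : 2^(2*t) ≡ 1 [MOD 3] := by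
  calc 2^(2*t) = 4^t := by rw [pow_mul]; norm_num
    _ ≡ 1^t [MOD 3] := Nat.ModEq.pow t (by decide)
    _ = 1 := one_pow t

lemma two_pow_odd_mod3 (t : ℕ) : 2^(2*t+1) ≡ 2 [MOD 3] := by
  calc 2^(2*t+1) = 2^(2*t) * 2 := by ring
    _ ≡ 1 * 2 [MOD 3] := (two_pow_even_mod3 t).mul_right 2
    _ = 2 := by ring

lemma two_pow_mod9 {s : ℕ} (hs : s % 6 = 1) : 2^s ≡ 2 [MOD 9] := by
  obtain ⟨q, rfl⟩ : ∃ q, s = 6*q + 1 := ⟨s/6, by omega⟩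
  calc 2^(6*q+1) = 64^q * 2 := by rw [pow_add, pow_mul]; norm_num
    _ ≡ 1^q * 2 [MOD 9] := (Nat.ModEq.pow q (by decide)).mul_right 2
    _ = 2 := by ring

-- Abbreviations for the nine digit lemmas, stated for arbitrary a b.
lemma E00 (a b : ℕ) : (3*a).choose (3*b) ≡ a.choose b [MOD 9] := (E0_all a b).1
lemma E01 (a b : ℕ) : (3*a).choose (3*b+1) ≡ 3*(a-b) * a.choose b [MOD 9] := (E0_all a b).2.1
lemma E02 (a b : ℕ) : (3*a).choose (3*b+2) ≡ 3*(a-b) * a.choose b [MOD 9] := (E0_all a b).2.2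
lemma E10 (a b : ℕ) : (3*a+1).choose (3*b) ≡ (1+3*b) * a.choose b [MOD 9] := (E1 (E0_all a) b).1
lemma E11 (a b : ℕ) : (3*a+1).choose (3*b+1) ≡ (1+3*(a-b)) * a.choose b [MOD 9] := (E1 (E0_all a) b).2.1
lemma E12 (a b : ℕ) : (3*a+1).choose (3*b+2) ≡ 6*(a-b) * a.choose b [MOD 9] := (E1 (E0_all a) b).2.2
lemma E20 (a b : ℕ) : (3*a+2).choose (3*b) ≡ a.choose b [MOD 9] := (E2 (E0_all a) b).1
lemma E21 (a b : ℕ) : (3*a+2).choose (3*b+1) ≡ (2+3*a) * a.choose b [MOD 9] := (E2 (E0_all a) b).2.1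
lemma E22 (a b : ℕ) : (3*a+2).choose (3*b+2) ≡ a.choose b [MOD 9] := (E2 (E0_all a) b).2.2

lemma d39 : (3:ℕ) ∣ 9 := by norm_num

-- Claim 1 : termwise recurrence for `a(3n)` mod 9.
lemma claim1 {r s : ℕ} (hr2 : 2 ≤ r) (n k : ℕ) :
    (3*n).choose (3*k) ^ r * (3*n + 3*k).choose (3*k) ^ s
      + (3*n).choose (3*k+1) ^ r * (3*n + (3*k+1)).choose (3*k+1) ^ s
      + (3*n).choose (3*k+2) ^ r * (3*n + (3*k+2)).choose (3*k+2) ^ s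
      ≡ n.choose k ^ r * (n+k).choose k ^ s [MOD 9] := by
  have e1 : 3*n + 3*k = 3*(n+k) := by ring
  have e2 : 3*n + (3*k+1) = 3*(n+k) + 1 := by ring
  have e3 : 3*n + (3*k+2) = 3*(n+k) + 2 := by ring
  rw [e1, e2, e3]
  have t0 : (3*n).choose (3*k) ^ r * (3*(n+k)).choose (3*k) ^ s
      ≡ n.choose k ^ r * (n+k).choose k ^ s [MOD 9] :=
    ((E00 n k).pow r).mul ((E00 (n+k) k).pow s)
  have z1 : (3*n).choose (3*k+1) ^ r ≡ 0 [MOD 9] :=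
    ((E01 n k).pow r).trans (by
      have : (3*(n-k) * n.choose k) ^ r = (3*((n-k) * n.choose k)) ^ r := by ring
      rw [this]; exact mod9_3pow _ hr2)
  have z2 : (3*n).choose (3*k+2) ^ r ≡ 0 [MOD 9] :=
    ((E02 n k).pow r).trans (by
      have : (3*(n-k) * n.choose k) ^ r = (3*((n-k) * n.choose k)) ^ r := by ring
      rw [this]; exact mod9_3pow _ hr2)
  calc _ ≡ n.choose k ^ r * (n+k).choose k ^ s
          + 0 * (3*(n+k)+1).choose (3*k+1) ^ s
          + 0 * (3*(n+k)+2).choose (3*k+2) ^ s [MOD 9] :=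
        (t0.add (z1.mul_right _)).add (z2.mul_right _)
    _ = n.choose k ^ r * (n+k).choose k ^ s := by ring

-- Claim 3 : termwise recurrence for `a(3n+1)` mod 9.
lemma claim3 {r s : ℕ} (hr2 : 2 ≤ r) (hr3 : r % 3 = 1) (hs6 : s % 6 = 1)
    {n k : ℕ} (hk : k ≤ n) :
    (3*n+1).choose (3*k) ^ r * ((3*n+1) + 3*k).choose (3*k) ^ s
      + (3*n+1).choose (3*k+1) ^ r * ((3*n+1) + (3*k+1)).choose (3*k+1) ^ s
      + (3*n+1).choose (3*k+2) ^ r * ((3*n+1) + (3*k+2)).choose (3*k+2) ^ s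
      ≡ 3*(k+1) * (n.choose k ^ r * (n+k).choose k ^ s) [MOD 9] := by
  obtain ⟨q, rfl⟩ : ∃ q, s = 6*q+1 := ⟨s/6, by omega⟩
  set s := 6*q+1 with hs
  have e1 : (3*n+1) + 3*k = 3*(n+k)+1 := by ring
  have e2 : (3*n+1) + (3*k+1) = 3*(n+k)+2 := by ring
  have e3 : (3*n+1) + (3*k+2) = 3*(n+k+1) := by ring
  rw [e1, e2, e3]
  set A := n.choose k with hA
  set C := (n+k).choose k with hC
  set Q := A^r * C^s with hQ
  -- i = 2 term vanishes
  have z2 : (3*n+1).choose (3*k+2) ^ r ≡ 0 [MOD 9] :=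
    ((E12 n k).pow r).trans (by
      have : (6*(n-k) * A) ^ r = (3*(2*(n-k) * A)) ^ r := by ring
      rw [this]; exact mod9_3pow _ hr2)
  -- i = 0 term
  have t0 : (3*n+1).choose (3*k) ^ r * (3*(n+k)+1).choose (3*k) ^ s
      ≡ (1+3*((r+s)*k)) * Q [MOD 9] := by
    calc (3*n+1).choose (3*k) ^ r * (3*(n+k)+1).choose (3*k) ^ s
        ≡ ((1+3*k)*A)^r * ((1+3*k)*C)^s [MOD 9] := ((E10 n k).pow r).mul ((E10 (n+k) k).pow s)
      _ = (1+3*k)^(r+s) * Q := by rw [hQ, mul_pow, mul_pow, pow_add]; ring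
      _ ≡ (1+3*((r+s)*k)) * Q [MOD 9] := (pow13 k (r+s)).mul_right Q
  -- i = 1 term
  have t1 : (3*n+1).choose (3*k+1) ^ r * (3*(n+k)+2).choose (3*k+1) ^ s
      ≡ (2^s + 3*((s*((n+k)*2^(6*q)) + r*(n-k)*2^s))) * Q [MOD 9] := by
    calc (3*n+1).choose (3*k+1) ^ r * (3*(n+k)+2).choose (3*k+1) ^ s
        ≡ ((1+3*(n-k))*A)^r * ((2+3*(n+k))*C)^s [MOD 9] :=
          ((E11 n k).pow r).mul ((E21 (n+k) k).pow s)
      _ = ((1+3*(n-k))^r * (2+3*(n+k))^s) * Q := by rw [hQ, mul_pow, mul_pow]; ring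
      _ ≡ ((1+3*(r*(n-k))) * (2^s + 3*(s*((n+k)*2^(6*q))))) * Q [MOD 9] := by
          refine Nat.ModEq.mul_right Q (Nat.ModEq.mul (pow13 (n-k) r) ?_)
          have := pow23 (n+k) (6*q)
          have e : (6*q+1)*(n+k)*2^(6*q) = s*((n+k)*2^(6*q)) := by rw [hs]; ring
          rwa [e] at this
      _ = (2^s + 3*((s*((n+k)*2^(6*q)) + r*(n-k)*2^s))
            + 9*(r*(n-k)*(s*((n+k)*2^(6*q))))) * Q := by ring
      _ ≡ (2^s + 3*((s*((n+k)*2^(6*q)) + r*(n-k)*2^s)) + 0) * Q [MOD 9] :=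
          Nat.ModEq.mul_right Q (Nat.ModEq.add_left _ (Nat.modEq_zero_iff_dvd.2 ⟨_, rfl⟩))
      _ = (2^s + 3*((s*((n+k)*2^(6*q)) + r*(n-k)*2^s))) * Q := by ring
  -- assemble
  set U := s*((n+k)*2^(6*q)) + r*(n-k)*2^s with hU
  set W := (r+s)*k + U with hW
  have hWk : W ≡ k [MOD 3] := by
    have hr1 : r ≡ 1 [MOD 3] := by show r % 3 = 1 % 3; omega
    have hs1 : s ≡ 1 [MOD 3] := by show s % 3 = 1 % 3; omega
    have h2e : (2:ℕ)^(6*q) ≡ 1 [MOD 3] := by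
      have := two_pow_even_mod3 (3*q); rwa [show 2*(3*q) = 6*q by ring] at this
    have h2o : (2:ℕ)^s ≡ 2 [MOD 3] := by
      have := two_pow_odd_mod3 (3*q); rwa [show 2*(3*q)+1 = s by rw [hs]; ring] at this
    have m0 : (r+s)*k ≡ 2*k [MOD 3] := Nat.ModEq.mul_right k (by show (r+s) % 3 = 2 % 3; omega)
    have m1 : s*((n+k)*2^(6*q)) ≡ 1*((n+k)*1) [MOD 3] :=
      hs1.mul ((Nat.ModEq.refl (n+k)).mul h2e)
    have m2 : r*(n-k)*2^s ≡ 1*(n-k)*2 [MOD 3] := (hr1.mul_right (n-k)).mul h2o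
    calc W ≡ 2*k + (1*((n+k)*1) + 1*(n-k)*2) [MOD 3] := m0.add (m1.add m2)
      _ ≡ k [MOD 3] := by show _ % 3 = k % 3; omega
  have hcoef : 1 + 2^s + 3*W ≡ 3*(k+1) [MOD 9] := by
    calc 1 + 2^s + 3*W ≡ 1 + 2 + 3*k [MOD 9] :=
          (Nat.ModEq.add_left 1 (two_pow_mod9 (by omega))).add (three_mul_mod9 hWk)
      _ = 3*(k+1) := by ring
  calc (3*n+1).choose (3*k) ^ r * (3*(n+k)+1).choose (3*k) ^ s
      + (3*n+1).choose (3*k+1) ^ r * (3*(n+k)+2).choose (3*k+1) ^ s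
      + (3*n+1).choose (3*k+2) ^ r * (3*(n+k+1)).choose (3*k+2) ^ s
      ≡ (1+3*((r+s)*k)) * Q + (2^s + 3*U) * Q + 0 * (3*(n+k+1)).choose (3*k+2) ^ s [MOD 9] :=
        (t0.add t1).add (z2.mul_right _)
    _ = (1 + 2^s + 3*W) * Q := by rw [hW]; ring
    _ ≡ 3*(k+1) * Q [MOD 9] := hcoef.mul_right Q

-- Claim 2 : termwise recurrence for `a(3n+2)` mod 9.
lemma claim2 {r s : ℕ} (hr2 : 2 ≤ r) (hs1 : 1 ≤ s) (hS : s = 1 → r % 2 = 0) (n k : ℕ) :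
    (3*n+2).choose (3*k) ^ r * ((3*n+2) + 3*k).choose (3*k) ^ s
      + (3*n+2).choose (3*k+1) ^ r * ((3*n+2) + (3*k+1)).choose (3*k+1) ^ s
      + (3*n+2).choose (3*k+2) ^ r * ((3*n+2) + (3*k+2)).choose (3*k+2) ^ s
      ≡ n.choose k ^ r * (n+k).choose k ^ s [MOD 9] := by
  have e1 : (3*n+2) + 3*k = 3*(n+k)+2 := by ring
  have e2 : (3*n+2) + (3*k+1) = 3*(n+k+1) := by ring
  have e3 : (3*n+2) + (3*k+2) = 3*(n+k+1)+1 := by ring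
  rw [e1, e2, e3]
  set A := n.choose k with hA
  set M := (n+k+1).choose k with hM
  have t0 : (3*n+2).choose (3*k) ^ r * (3*(n+k)+2).choose (3*k) ^ s
      ≡ n.choose k ^ r * (n+k).choose k ^ s [MOD 9] :=
    ((E20 n k).pow r).mul ((E20 (n+k) k).pow s)
  have c2 : (3*(n+k+1)).choose (3*k+1) ≡ 3*((n+1)*M) [MOD 9] := by
    have := E01 (n+k+1) k
    have e : (n+k+1)-k = n+1 := by omega
    rw [e] at this
    exact this.trans (by rw [show 3*(n+1)*M = 3*((n+1)*M) by ring])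
  have c4 : (3*(n+k+1)+1).choose (3*k+2) ≡ 3*(2*((n+1)*M)) [MOD 9] := by
    have := E12 (n+k+1) k
    have e : (n+k+1)-k = n+1 := by omega
    rw [e] at this
    exact this.trans (by rw [show 6*(n+1)*M = 3*(2*((n+1)*M)) by ring])
  rcases Nat.lt_or_ge s 2 with hs2 | hs2
  · -- s = 1
    have hs' : s = 1 := by omega
    subst hs'
    have hre : r % 2 = 0 := hS rfl
    obtain ⟨t, rfl⟩ : ∃ t, r = 2*t := ⟨r/2, by omega⟩
    obtain ⟨r', hr'⟩ : ∃ r', 2*t = r'+1 := ⟨2*t-1, by omega⟩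
    have t1 : (3*n+2).choose (3*k+1) ^ (2*t) * (3*(n+k+1)).choose (3*k+1) ^ 1
        ≡ ((2+3*n)*A)^(2*t) * (3*((n+1)*M)) [MOD 9] := by
      rw [pow_one]
      exact ((E21 n k).pow (2*t)).mul c2
    have t2 : (3*n+2).choose (3*k+2) ^ (2*t) * (3*(n+k+1)+1).choose (3*k+2) ^ 1
        ≡ A^(2*t) * (3*(2*((n+1)*M))) [MOD 9] := by
      rw [pow_one]
      exact ((E22 n k).pow (2*t)).mul c4
    have key : ((2+3*n)*A)^(2*t) * (3*((n+1)*M)) + A^(2*t) * (3*(2*((n+1)*M)))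
        ≡ 0 [MOD 9] := by
      have hp : (2+3*n)^(2*t) * (3*((n+1)*M)) ≡ 3*(2^(2*t)*((n+1)*M)) [MOD 9] := by
        have h1 := (pow23 n r').mul_right (3*((n+1)*M))
        rw [← hr'] at h1
        refine h1.trans ?_
        calc (2^(2*t) + 3*((2*t)*n*2^r')) * (3*((n+1)*M))
            = 3*(2^(2*t)*((n+1)*M)) + 9*((2*t)*n*2^r'*((n+1)*M)) := by ring
          _ ≡ 3*(2^(2*t)*((n+1)*M)) + 0 [MOD 9] :=
              Nat.ModEq.add_left _ (Nat.modEq_zero_iff_dvd.2 ⟨_, rfl⟩)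
          _ = 3*(2^(2*t)*((n+1)*M)) := by ring
      have h2 : 2^(2*t)*((n+1)*M) + 2*((n+1)*M) ≡ 0 [MOD 3] := by
        have h3 : (2:ℕ)^(2*t) ≡ 1 [MOD 3] := two_pow_even_mod3 t
        calc 2^(2*t)*((n+1)*M) + 2*((n+1)*M) ≡ 1*((n+1)*M) + 2*((n+1)*M) [MOD 3] :=
              (h3.mul_right _).add_right _
          _ = 3*((n+1)*M) := by ring
          _ ≡ 0 [MOD 3] := Nat.modEq_zero_iff_dvd.2 ⟨_, rfl⟩
      calc ((2+3*n)*A)^(2*t) * (3*((n+1)*M)) + A^(2*t) * (3*(2*((n+1)*M)))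
          = ((2+3*n)^(2*t) * (3*((n+1)*M))) * A^(2*t) + A^(2*t) * (3*(2*((n+1)*M))) := by
            rw [mul_pow]; ring
        _ ≡ (3*(2^(2*t)*((n+1)*M))) * A^(2*t) + A^(2*t) * (3*(2*((n+1)*M))) [MOD 9] :=
            (hp.mul_right _).add_right _
        _ = (3*(2^(2*t)*((n+1)*M) + 2*((n+1)*M))) * A^(2*t) := by ring
        _ ≡ (3*0) * A^(2*t) [MOD 9] := (three_mul_mod9 h2).mul_right _
        _ = 0 := by ring
    calc (3*n+2).choose (3*k) ^ (2*t) * (3*(n+k)+2).choose (3*k) ^ 1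
        + (3*n+2).choose (3*k+1) ^ (2*t) * (3*(n+k+1)).choose (3*k+1) ^ 1
        + (3*n+2).choose (3*k+2) ^ (2*t) * (3*(n+k+1)+1).choose (3*k+2) ^ 1
        ≡ n.choose k ^ (2*t) * (n+k).choose k ^ 1
          + (((2+3*n)*A)^(2*t) * (3*((n+1)*M)) + A^(2*t) * (3*(2*((n+1)*M)))) [MOD 9] := by
          rw [add_assoc]
          exact t0.add (t1.add t2)
      _ ≡ n.choose k ^ (2*t) * (n+k).choose k ^ 1 + 0 [MOD 9] := Nat.ModEq.add_left _ key
      _ = n.choose k ^ (2*t) * (n+k).choose k ^ 1 := by ring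
  · -- s ≥ 2
    have z1 : (3*(n+k+1)).choose (3*k+1) ^ s ≡ 0 [MOD 9] :=
      (c2.pow s).trans (mod9_3pow _ hs2)
    have z2 : (3*(n+k+1)+1).choose (3*k+2) ^ s ≡ 0 [MOD 9] :=
      (c4.pow s).trans (mod9_3pow _ hs2)
    calc (3*n+2).choose (3*k) ^ r * (3*(n+k)+2).choose (3*k) ^ s
        + (3*n+2).choose (3*k+1) ^ r * (3*(n+k+1)).choose (3*k+1) ^ s
        + (3*n+2).choose (3*k+2) ^ r * (3*(n+k+1)+1).choose (3*k+2) ^ s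
        ≡ n.choose k ^ r * (n+k).choose k ^ s
          + (3*n+2).choose (3*k+1) ^ r * 0
          + (3*n+2).choose (3*k+2) ^ r * 0 [MOD 9] :=
          (t0.add (z1.mul_left _)).add (z2.mul_left _)
      _ = n.choose k ^ r * (n+k).choose k ^ s := by ring

-- mod 3 Lucas-type corollaries
lemma z3 (x : ℕ) : 3*x ≡ 0 [MOD 3] := Nat.modEq_zero_iff_dvd.2 ⟨x, rfl⟩

lemma L00 (a b : ℕ) : (3*a).choose (3*b) ≡ a.choose b [MOD 3] := (E00 a b).of_dvd d39
lemma L01 (a b : ℕ) : (3*a).choose (3*b+1) ≡ 0 [MOD 3] :=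
  ((E01 a b).of_dvd d39).trans (by have := z3 ((a-b) * a.choose b); rwa [show 3*((a-b)*a.choose b) = 3*(a-b)*a.choose b by ring] at this)
lemma L02 (a b : ℕ) : (3*a).choose (3*b+2) ≡ 0 [MOD 3] :=
  ((E02 a b).of_dvd d39).trans (by have := z3 ((a-b) * a.choose b); rwa [show 3*((a-b)*a.choose b) = 3*(a-b)*a.choose b by ring] at this)
lemma L10 (a b : ℕ) : (3*a+1).choose (3*b) ≡ a.choose b [MOD 3] :=
  ((E10 a b).of_dvd d39).trans (by
    calc (1+3*b) * a.choose b = a.choose b + 3*(b*a.choose b) := by ring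
      _ ≡ a.choose b + 0 [MOD 3] := Nat.ModEq.add_left _ (z3 _)
      _ = a.choose b := by ring)
lemma L11 (a b : ℕ) : (3*a+1).choose (3*b+1) ≡ a.choose b [MOD 3] :=
  ((E11 a b).of_dvd d39).trans (by
    calc (1+3*(a-b)) * a.choose b = a.choose b + 3*((a-b)*a.choose b) := by ring
      _ ≡ a.choose b + 0 [MOD 3] := Nat.ModEq.add_left _ (z3 _)
      _ = a.choose b := by ring)
lemma L12 (a b : ℕ) : (3*a+1).choose (3*b+2) ≡ 0 [MOD 3] :=
  ((E12 a b).of_dvd d39).trans (by have := z3 (2*((a-b) * a.choose b)); rwa [show 3*(2*((a-b)*a.choose b)) = 6*(a-b)*a.choose b by ring] at this)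
lemma L20 (a b : ℕ) : (3*a+2).choose (3*b) ≡ a.choose b [MOD 3] := (E20 a b).of_dvd d39
lemma L21 (a b : ℕ) : (3*a+2).choose (3*b+1) ≡ 2 * a.choose b [MOD 3] :=
  ((E21 a b).of_dvd d39).trans (by
    calc (2+3*a) * a.choose b = 2*a.choose b + 3*(a*a.choose b) := by ring
      _ ≡ 2*a.choose b + 0 [MOD 3] := Nat.ModEq.add_left _ (z3 _)
      _ = 2*a.choose b := by ring)
lemma L22 (a b : ℕ) : (3*a+2).choose (3*b+2) ≡ a.choose b [MOD 3] := (E22 a b).of_dvd d39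

-- Claim 4 : termwise recurrence for `b(3n)` mod 3.
lemma claim4 {r s : ℕ} (hr1 : 1 ≤ r) (n k : ℕ) :
    (3*n).choose (3*k) ^ r * ((3*n) + 3*k).choose (3*k) ^ s * (3*k+1)
      + (3*n).choose (3*k+1) ^ r * ((3*n) + (3*k+1)).choose (3*k+1) ^ s * (3*k+1+1)
      + (3*n).choose (3*k+2) ^ r * ((3*n) + (3*k+2)).choose (3*k+2) ^ s * (3*k+2+1)
      ≡ n.choose k ^ r * (n+k).choose k ^ s [MOD 3] := by
  rw [show (3*n) + 3*k = 3*(n+k) by ring, show (3*n) + (3*k+1) = 3*(n+k)+1 by ring,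
      show (3*n) + (3*k+2) = 3*(n+k)+2 by ring]
  have t0 : (3*n).choose (3*k) ^ r * (3*(n+k)).choose (3*k) ^ s * (3*k+1)
      ≡ n.choose k ^ r * (n+k).choose k ^ s * 1 [MOD 3] :=
    (((L00 n k).pow r).mul ((L00 (n+k) k).pow s)).mul (by show (3*k+1) % 3 = 1 % 3; omega)
  have z1 : (3*n).choose (3*k+1) ^ r ≡ 0 [MOD 3] :=
    ((L01 n k).pow r).trans (by rw [zero_pow (by omega)])
  have z2 : (3*n).choose (3*k+2) ^ r ≡ 0 [MOD 3] :=
    ((L02 n k).pow r).trans (by rw [zero_pow (by omega)])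
  calc _ ≡ n.choose k ^ r * (n+k).choose k ^ s * 1
        + 0 * (3*(n+k)+1).choose (3*k+1) ^ s * (3*k+1+1)
        + 0 * (3*(n+k)+2).choose (3*k+2) ^ s * (3*k+2+1) [MOD 3] :=
      (t0.add ((z1.mul_right _).mul_right _)).add ((z2.mul_right _).mul_right _)
    _ = n.choose k ^ r * (n+k).choose k ^ s := by ring

-- Claim 5 : termwise recurrence for `b(3n+2)` mod 3.
lemma claim5 {r s : ℕ} (hs1 : 1 ≤ s) (n k : ℕ) :
    (3*n+2).choose (3*k) ^ r * ((3*n+2) + 3*k).choose (3*k) ^ s * (3*k+1)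
      + (3*n+2).choose (3*k+1) ^ r * ((3*n+2) + (3*k+1)).choose (3*k+1) ^ s * (3*k+1+1)
      + (3*n+2).choose (3*k+2) ^ r * ((3*n+2) + (3*k+2)).choose (3*k+2) ^ s * (3*k+2+1)
      ≡ n.choose k ^ r * (n+k).choose k ^ s [MOD 3] := by
  rw [show (3*n+2) + 3*k = 3*(n+k)+2 by ring, show (3*n+2) + (3*k+1) = 3*(n+k+1) by ring,
      show (3*n+2) + (3*k+2) = 3*(n+k+1)+1 by ring]
  have t0 : (3*n+2).choose (3*k) ^ r * (3*(n+k)+2).choose (3*k) ^ s * (3*k+1)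
      ≡ n.choose k ^ r * (n+k).choose k ^ s * 1 [MOD 3] :=
    (((L20 n k).pow r).mul ((L20 (n+k) k).pow s)).mul (by show (3*k+1) % 3 = 1 % 3; omega)
  have z1 : (3*(n+k+1)).choose (3*k+1) ^ s ≡ 0 [MOD 3] :=
    ((L01 (n+k+1) k).pow s).trans (by rw [zero_pow (by omega)])
  have z2 : (3*k+2+1) ≡ 0 [MOD 3] := by show _ % 3 = 0 % 3; omega
  calc _ ≡ n.choose k ^ r * (n+k).choose k ^ s * 1
        + (3*n+2).choose (3*k+1) ^ r * 0 * (3*k+1+1)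
        + (3*n+2).choose (3*k+2) ^ r * (3*(n+k+1)+1).choose (3*k+2) ^ s * 0 [MOD 3] :=
      (t0.add (((z1.mul_left _)).mul_right _)).add (z2.mul_left _)
    _ = n.choose k ^ r * (n+k).choose k ^ s := by ring

-- Claim 6 : termwise recurrence for `b(3n+1)` mod 3.
lemma claim6 {r s : ℕ} (hr1 : 1 ≤ r) (hs6 : s % 6 = 1) (n k : ℕ) :
    (3*n+1).choose (3*k) ^ r * ((3*n+1) + 3*k).choose (3*k) ^ s * (3*k+1)
      + (3*n+1).choose (3*k+1) ^ r * ((3*n+1) + (3*k+1)).choose (3*k+1) ^ s * (3*k+1+1)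
      + (3*n+1).choose (3*k+2) ^ r * ((3*n+1) + (3*k+2)).choose (3*k+2) ^ s * (3*k+2+1)
      ≡ 2 * (n.choose k ^ r * (n+k).choose k ^ s) [MOD 3] := by
  rw [show (3*n+1) + 3*k = 3*(n+k)+1 by ring, show (3*n+1) + (3*k+1) = 3*(n+k)+2 by ring,
      show (3*n+1) + (3*k+2) = 3*(n+k+1) by ring]
  set A := n.choose k
  set C := (n+k).choose k
  have t0 : (3*n+1).choose (3*k) ^ r * (3*(n+k)+1).choose (3*k) ^ s * (3*k+1)
      ≡ A ^ r * C ^ s * 1 [MOD 3] :=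
    (((L10 n k).pow r).mul ((L10 (n+k) k).pow s)).mul (by show (3*k+1) % 3 = 1 % 3; omega)
  have t1 : (3*n+1).choose (3*k+1) ^ r * (3*(n+k)+2).choose (3*k+1) ^ s * (3*k+1+1)
      ≡ A ^ r * C ^ s * 1 [MOD 3] := by
    obtain ⟨t, rfl⟩ : ∃ t, s = 2*t+1 := ⟨s/2, by omega⟩
    have h1 : (3*n+1).choose (3*k+1) ^ r * (3*(n+k)+2).choose (3*k+1) ^ (2*t+1) * (3*k+1+1)
        ≡ A ^ r * (2*C) ^ (2*t+1) * 2 [MOD 3] :=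
      (((L11 n k).pow r).mul ((L21 (n+k) k).pow (2*t+1))).mul
        (by show (3*k+1+1) % 3 = 2 % 3; omega)
    refine h1.trans ?_
    have e : A ^ r * (2*C) ^ (2*t+1) * 2 = 2^(2*(t+1)) * (A ^ r * C ^ (2*t+1)) := by
      rw [mul_pow]; ring
    rw [e]
    calc 2^(2*(t+1)) * (A ^ r * C ^ (2*t+1)) ≡ 1 * (A ^ r * C ^ (2*t+1)) [MOD 3] :=
          (two_pow_even_mod3 (t+1)).mul_right _
      _ = A ^ r * C ^ (2*t+1) * 1 := by ring
  have z2 : (3*n+1).choose (3*k+2) ^ r ≡ 0 [MOD 3] :=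
    ((L12 n k).pow r).trans (by rw [zero_pow (by omega)])
  calc _ ≡ A ^ r * C ^ s * 1 + A ^ r * C ^ s * 1
        + 0 * (3*(n+k+1)).choose (3*k+2) ^ s * (3*k+2+1) [MOD 3] :=
      (t0.add t1).add ((z2.mul_right _).mul_right _)
    _ = 2 * (A ^ r * C ^ s) := by ring

/-- the auxiliary sequence `b_n(r,s)` -/
def bper (r s n : ℕ) : ℕ :=
  ∑ k ∈ Finset.range (n + 1), n.choose k ^ r * (n + k).choose k ^ s * (k+1)

lemma sum_range_triple (f : ℕ → ℕ) : ∀ M : ℕ,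
    ∑ j ∈ Finset.range (3*M), f j = ∑ k ∈ Finset.range M, (f (3*k) + f (3*k+1) + f (3*k+2)) := by
  intro M
  induction M with
  | zero => simp
  | succ M ih =>
    rw [Finset.sum_range_succ, ← ih, show 3*(M+1) = 3*M+1+1+1 by ring,
        Finset.sum_range_succ, Finset.sum_range_succ, Finset.sum_range_succ]
    ring

lemma sum_modEq {α : Type*} {t : Finset α} {f g : α → ℕ} {n : ℕ}
    (h : ∀ i ∈ t, f i ≡ g i [MOD n]) : ∑ i ∈ t, f i ≡ ∑ i ∈ t, g i [MOD n] := by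
  classical
  induction t using Finset.induction with
  | empty => rfl
  | insert _ _ hx ih =>
    rw [Finset.sum_insert hx, Finset.sum_insert hx]
    exact (h _ (Finset.mem_insert_self _ _)).add (ih fun i hi => h i (Finset.mem_insert_of_mem hi))

section recs
variable {r s : ℕ} (hr2 : 2 ≤ r) (hr3 : r % 3 = 1) (hs6 : s % 6 = 1) (hS : s = 1 → r % 2 = 0)

include hr2 in
lemma rec0 (n : ℕ) : apery r s (3*n) ≡ apery r s n [MOD 9] := by
  have hext : apery r s (3*n) = ∑ j ∈ Finset.range (3*(n+1)),
      (3*n).choose j ^ r * ((3*n) + j).choose j ^ s := by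
    rw [show 3*(n+1) = (3*n+1)+1+1 by ring, Finset.sum_range_succ, Finset.sum_range_succ,
        Nat.choose_eq_zero_of_lt (show 3*n < 3*n+1 by omega),
        Nat.choose_eq_zero_of_lt (show 3*n < 3*n+2 by omega),
        zero_pow (show r ≠ 0 by omega), zero_mul, add_zero, zero_mul, add_zero]
    rfl
  rw [hext, sum_range_triple]
  exact sum_modEq fun k _ => claim1 hr2 n k

include hr2 hs6 hS in
lemma rec2 (n : ℕ) : apery r s (3*n+2) ≡ apery r s n [MOD 9] := by
  have hext : apery r s (3*n+2) = ∑ j ∈ Finset.range (3*(n+1)),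
      (3*n+2).choose j ^ r * ((3*n+2) + j).choose j ^ s := by
    rw [show 3*(n+1) = (3*n+2)+1 by ring]
    rfl
  rw [hext, sum_range_triple]
  exact sum_modEq fun k _ => claim2 hr2 (by omega) hS n k

include hr2 hr3 hs6 in
lemma rec1 (n : ℕ) : apery r s (3*n+1) ≡ 3 * bper r s n [MOD 9] := by
  have hext : apery r s (3*n+1) = ∑ j ∈ Finset.range (3*(n+1)),
      (3*n+1).choose j ^ r * ((3*n+1) + j).choose j ^ s := by
    rw [show 3*(n+1) = (3*n+1)+1+1 by ring, Finset.sum_range_succ,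
        Nat.choose_eq_zero_of_lt (show 3*n+1 < 3*n+2 by omega),
        zero_pow (show r ≠ 0 by omega), zero_mul, add_zero]
    rfl
  rw [hext, sum_range_triple, bper, Finset.mul_sum]
  refine sum_modEq fun k hk => ?_
  have hkn : k ≤ n := by have := Finset.mem_range.1 hk; omega
  refine (claim3 hr2 hr3 hs6 hkn).trans ?_
  rw [show 3*(k+1) * (n.choose k ^ r * (n+k).choose k ^ s)
      = 3 * (n.choose k ^ r * (n+k).choose k ^ s * (k+1)) by ring]

include hr2 in
lemma recb0 (n : ℕ) : bper r s (3*n) ≡ apery r s n [MOD 3] := by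
  have hext : bper r s (3*n) = ∑ j ∈ Finset.range (3*(n+1)),
      (3*n).choose j ^ r * ((3*n) + j).choose j ^ s * (j+1) := by
    rw [show 3*(n+1) = (3*n+1)+1+1 by ring, Finset.sum_range_succ, Finset.sum_range_succ,
        Nat.choose_eq_zero_of_lt (show 3*n < 3*n+1 by omega),
        Nat.choose_eq_zero_of_lt (show 3*n < 3*n+2 by omega),
        zero_pow (show r ≠ 0 by omega), zero_mul, zero_mul, add_zero, zero_mul, zero_mul, add_zero]
    rfl
  rw [hext, sum_range_triple]
  exact sum_modEq fun k _ => claim4 (by omega) n k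

include hs6 in
lemma recb2 (n : ℕ) : bper r s (3*n+2) ≡ apery r s n [MOD 3] := by
  have hext : bper r s (3*n+2) = ∑ j ∈ Finset.range (3*(n+1)),
      (3*n+2).choose j ^ r * ((3*n+2) + j).choose j ^ s * (j+1) := by
    rw [show 3*(n+1) = (3*n+2)+1 by ring]
    rfl
  rw [hext, sum_range_triple]
  exact sum_modEq fun k _ => claim5 (by omega) n k

include hr2 hs6 in
lemma recb1 (n : ℕ) : bper r s (3*n+1) ≡ 2 * apery r s n [MOD 3] := by
  have hext : bper r s (3*n+1) = ∑ j ∈ Finset.range (3*(n+1)),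
      (3*n+1).choose j ^ r * ((3*n+1) + j).choose j ^ s * (j+1) := by
    rw [show 3*(n+1) = (3*n+1)+1+1 by ring, Finset.sum_range_succ,
        Nat.choose_eq_zero_of_lt (show 3*n+1 < 3*n+2 by omega),
        zero_pow (show r ≠ 0 by omega), zero_mul, zero_mul, add_zero]
    rfl
  rw [hext, sum_range_triple, apery, Finset.mul_sum]
  exact sum_modEq fun k _ => claim6 (by omega) hs6 n k

end recs

/-- the `i`-th digit of `n` in base 3 -/
def dig (n i : ℕ) : ℕ := n / 3^i % 3

def GoodD (n : ℕ) : Prop := ∀ i, dig n i ≠ 1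
def OneD (n : ℕ) : Prop := ∃ i, dig n i = 1 ∧ ∀ j, j ≠ i → dig n j ≠ 1
def TwoD (n : ℕ) : Prop :=
  ∃ i, dig n i = 1 ∧ dig n (i+1) = 1 ∧ ∀ j, j ≠ i → j ≠ i+1 → dig n j ≠ 1
def OneLowD (n : ℕ) : Prop := dig n 0 = 1 ∧ ∀ t, t ≠ 0 → dig n t ≠ 1

lemma dig_lt (n i : ℕ) : dig n i < 3 := Nat.mod_lt _ (by omega)

lemma dig_zero' (n j : ℕ) (hj : j < 3) : dig (3*n+j) 0 = j := by
  simp only [dig, pow_zero, Nat.div_one]; omega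

lemma dig_succ' (n j i : ℕ) (hj : j < 3) : dig (3*n+j) (i+1) = dig n i := by
  have h1 : (3*n+j) / 3 = n := by omega
  simp only [dig, pow_succ, pow_zero]
  rw [show (3:ℕ)^i * 3 = 3 * 3^i by ring, ← Nat.div_div_eq_div_mul, h1]

lemma dig_zero_n (i : ℕ) : dig 0 i = 0 := by simp [dig]

lemma good_zero : GoodD 0 := fun i => by rw [dig_zero_n]; omega

lemma good_iff {j : ℕ} (hj : j < 3) (hj1 : j ≠ 1) (m : ℕ) : GoodD (3*m+j) ↔ GoodD m := by
  constructor
  · intro h i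
    have := h (i+1); rwa [dig_succ' m j i hj] at this
  · intro h i
    cases i with
    | zero => rw [dig_zero' m j hj]; exact hj1
    | succ i => rw [dig_succ' m j i hj]; exact h i

lemma not_good_one (m : ℕ) : ¬ GoodD (3*m+1) := fun h => h 0 (dig_zero' m 1 (by omega))

lemma one_iff {j : ℕ} (hj : j < 3) (hj1 : j ≠ 1) (m : ℕ) : OneD (3*m+j) ↔ OneD m := by
  constructor
  · rintro ⟨i, hi, hall⟩
    cases i with
    | zero => rw [dig_zero' m j hj] at hi; omega
    | succ i =>
      rw [dig_succ' m j i hj] at hi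
      refine ⟨i, hi, fun t ht => ?_⟩
      have := hall (t+1) (by omega)
      rwa [dig_succ' m j t hj] at this
  · rintro ⟨i, hi, hall⟩
    refine ⟨i+1, by rwa [dig_succ' m j i hj], fun t ht => ?_⟩
    cases t with
    | zero => rw [dig_zero' m j hj]; exact hj1
    | succ t => rw [dig_succ' m j t hj]; exact hall t (by omega)

lemma one_one_iff (m : ℕ) : OneD (3*m+1) ↔ GoodD m := by
  constructor
  · rintro ⟨i, hi, hall⟩
    have h0 : dig (3*m+1) 0 = 1 := dig_zero' m 1 (by omega)
    have hi0 : i = 0 := by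
      by_contra h
      exact hall 0 (fun e => h e.symm) h0
    subst hi0
    intro t
    have := hall (t+1) (by omega)
    rwa [dig_succ' m 1 t (by omega)] at this
  · intro h
    refine ⟨0, dig_zero' m 1 (by omega), fun t ht => ?_⟩
    obtain ⟨t', rfl⟩ : ∃ t', t = t'+1 := ⟨t-1, by omega⟩
    rw [dig_succ' m 1 t' (by omega)]
    exact h t'

lemma two_iff {j : ℕ} (hj : j < 3) (hj1 : j ≠ 1) (m : ℕ) : TwoD (3*m+j) ↔ TwoD m := by
  constructor
  · rintro ⟨i, h1, h2, hall⟩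
    cases i with
    | zero => rw [dig_zero' m j hj] at h1; omega
    | succ i =>
      rw [dig_succ' m j i hj] at h1
      rw [show i+1+1 = (i+1)+1 from rfl, dig_succ' m j (i+1) hj] at h2
      refine ⟨i, h1, h2, fun t ht1 ht2 => ?_⟩
      have := hall (t+1) (by omega) (by omega)
      rwa [dig_succ' m j t hj] at this
  · rintro ⟨i, h1, h2, hall⟩
    refine ⟨i+1, by rwa [dig_succ' m j i hj],
      by rw [show i+1+1 = (i+1)+1 from rfl, dig_succ' m j (i+1) hj]; exact h2,
      fun t ht1 ht2 => ?_⟩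
    cases t with
    | zero => rw [dig_zero' m j hj]; exact hj1
    | succ t => rw [dig_succ' m j t hj]; exact hall t (by omega) (by omega)

lemma two_one_iff (m : ℕ) : TwoD (3*m+1) ↔ OneLowD m := by
  constructor
  · rintro ⟨i, h1, h2, hall⟩
    have h0 : dig (3*m+1) 0 = 1 := dig_zero' m 1 (by omega)
    have hi0 : i = 0 := by
      by_contra h
      exact hall 0 (fun e => h e.symm) (by omega) h0
    subst hi0
    rw [dig_succ' m 1 0 (by omega)] at h2
    refine ⟨h2, fun t ht => ?_⟩
    have := hall (t+1) (by omega) (by omega)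
    rwa [dig_succ' m 1 t (by omega)] at this
  · rintro ⟨h1, hall⟩
    refine ⟨0, dig_zero' m 1 (by omega),
      by rw [dig_succ' m 1 0 (by omega)]; exact h1, fun t ht1 ht2 => ?_⟩
    obtain ⟨t', rfl⟩ : ∃ t', t = t'+1 := ⟨t-1, by omega⟩
    rw [dig_succ' m 1 t' (by omega)]
    exact hall t' (by omega)

lemma not_onelow {j : ℕ} (hj : j < 3) (hj1 : j ≠ 1) (m : ℕ) : ¬ OneLowD (3*m+j) := by
  rintro ⟨h1, -⟩
  rw [dig_zero' m j hj] at h1; omega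

lemma onelow_one_iff (m : ℕ) : OneLowD (3*m+1) ↔ GoodD m := by
  constructor
  · rintro ⟨h1, hall⟩ t
    have := hall (t+1) (by omega)
    rwa [dig_succ' m 1 t (by omega)] at this
  · intro h
    refine ⟨dig_zero' m 1 (by omega), fun t ht => ?_⟩
    obtain ⟨t', rfl⟩ : ∃ t', t = t'+1 := ⟨t-1, by omega⟩
    rw [dig_succ' m 1 t' (by omega)]
    exact h t'

lemma good_not_one {n : ℕ} (h : GoodD n) : ¬ OneD n := by
  rintro ⟨i, hi, -⟩; exact h i hi

lemma good_not_two {n : ℕ} (h : GoodD n) : ¬ TwoD n := by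
  rintro ⟨i, hi, -, -⟩; exact h i hi

lemma one_not_two {n : ℕ} (h : OneD n) : ¬ TwoD n := by
  obtain ⟨i, hi, hall⟩ := h
  rintro ⟨i', h1, h2, -⟩
  by_cases e : i' = i
  · subst e
    exact hall (i'+1) (by omega) h2
  · exact hall i' e h1

open Classical in
noncomputable def val9 (n : ℕ) : ZMod 9 :=
  if GoodD n then 1 else if OneD n then 3 else if TwoD n then 6 else 0

open Classical in
noncomputable def val3 (n : ℕ) : ZMod 3 :=
  if GoodD n then 1 else if OneLowD n then 2 else 0

lemma val9_cong {u v : ℕ} (hg : GoodD u ↔ GoodD v) (h1 : OneD u ↔ OneD v)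
    (h2 : TwoD u ↔ TwoD v) : val9 u = val9 v := by
  classical
  unfold val9
  exact if_congr hg rfl (if_congr h1 rfl (if_congr h2 rfl rfl))

lemma cast9 {u v : ℕ} (h : u ≡ v [MOD 9]) : (u : ZMod 9) = v :=
  (ZMod.natCast_eq_natCast_iff _ _ _).mpr h

lemma cast3 {u v : ℕ} (h : u ≡ v [MOD 3]) : (u : ZMod 3) = v :=
  (ZMod.natCast_eq_natCast_iff _ _ _).mpr h

lemma uncast3 {u v : ℕ} (h : (u : ZMod 3) = v) : u ≡ v [MOD 3] :=
  (ZMod.natCast_eq_natCast_iff _ _ _).mp h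

section values
variable {r s : ℕ} (hr2 : 2 ≤ r) (hr3 : r % 3 = 1) (hs6 : s % 6 = 1) (hS : s = 1 → r % 2 = 0)

include hr2 hr3 hs6 hS in
lemma values : ∀ n, ((apery r s n : ZMod 9) = val9 n) ∧ ((bper r s n : ZMod 3) = val3 n) := by
  classical
  intro n
  induction n using Nat.strong_induction_on with
  | _ n ih =>
  have apery3 : ∀ m, ((apery r s m : ZMod 9) = val9 m) →
      ((apery r s m : ZMod 3) = if GoodD m then 1 else 0) := by
    intro m h9
    have hmap := congrArg (ZMod.castHom (by norm_num : (3:ℕ) ∣ 9) (ZMod 3)) h9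
    rw [map_natCast] at hmap
    rw [hmap]
    unfold val9
    split_ifs <;> decide
  rcases Nat.eq_zero_or_pos n with rfl | hn
  · constructor
    · have h1 : apery r s 0 = 1 := by simp [apery]
      rw [h1, val9, if_pos good_zero, Nat.cast_one]
    · have h1 : bper r s 0 = 1 := by simp [bper]
      rw [h1, val3, if_pos good_zero, Nat.cast_one]
  · obtain ⟨m, j, hj3, rfl⟩ : ∃ m j, j < 3 ∧ n = 3*m+j := ⟨n/3, n%3, by omega, by omega⟩
    have hmn : m < 3*m+j := by omega
    have ihm := ih m hmn
    have hj : j = 0 ∨ j = 1 ∨ j = 2 := by omega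
    rcases hj with rfl | rfl | rfl
    · -- n = 3m + 0
      constructor
      · show ((apery r s (3*m) : ZMod 9)) = val9 (3*m+0)
        rw [cast9 (rec0 hr2 m), ihm.1]
        exact (val9_cong (good_iff (by omega) (by omega) m) (one_iff (by omega) (by omega) m)
          (two_iff (by omega) (by omega) m)).symm
      · show ((bper r s (3*m) : ZMod 3)) = val3 (3*m+0)
        rw [cast3 (recb0 hr2 m), apery3 m ihm.1, val3]
        by_cases hG : GoodD m
        · rw [if_pos hG, if_pos ((good_iff (by omega) (by omega) m).mpr hG)]
        · rw [if_neg hG, if_neg (fun h => hG ((good_iff (by omega) (by omega) m).mp h)),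
              if_neg (not_onelow (by omega) (by omega) m)]
    · -- n = 3m + 1
      constructor
      · rw [cast9 (rec1 hr2 hr3 hs6 m)]
        by_cases hG : GoodD m
        · have hb : bper r s m ≡ 1 [MOD 3] := by
            refine uncast3 ?_
            rw [ihm.2, val3, if_pos hG, Nat.cast_one]
          have h9 : 3 * bper r s m ≡ 3 * 1 [MOD 9] := three_mul_mod9 hb
          rw [cast9 h9, val9, if_neg (not_good_one m), if_pos ((one_one_iff m).mpr hG)]
          norm_num
        · by_cases hL : OneLowD m
          · have hb : bper r s m ≡ 2 [MOD 3] := by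
              refine uncast3 ?_
              rw [ihm.2, val3, if_neg hG, if_pos hL]
              norm_num
            have h9 : 3 * bper r s m ≡ 3 * 2 [MOD 9] := three_mul_mod9 hb
            rw [cast9 h9, val9, if_neg (not_good_one m),
                if_neg (fun h => hG ((one_one_iff m).mp h)),
                if_pos ((two_one_iff m).mpr hL)]
            norm_num
          · have hb : bper r s m ≡ 0 [MOD 3] := by
              refine uncast3 ?_
              rw [ihm.2, val3, if_neg hG, if_neg hL, Nat.cast_zero]
            have h9 : 3 * bper r s m ≡ 3 * 0 [MOD 9] := three_mul_mod9 hb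
            rw [cast9 h9, val9, if_neg (not_good_one m),
                if_neg (fun h => hG ((one_one_iff m).mp h)),
                if_neg (fun h => hL ((two_one_iff m).mp h))]
            norm_num
      · rw [cast3 (recb1 hr2 hs6 m), Nat.cast_mul, apery3 m ihm.1, val3]
        by_cases hG : GoodD m
        · rw [if_pos hG, if_neg (not_good_one m), if_pos ((onelow_one_iff m).mpr hG)]
          norm_num
        · rw [if_neg hG, if_neg (not_good_one m),
              if_neg (fun h => hG ((onelow_one_iff m).mp h))]
          norm_num
    · -- n = 3m + 2
      constructor
      · rw [cast9 (rec2 hr2 hs6 hS m), ihm.1]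
        exact (val9_cong (good_iff (by omega) (by omega) m) (one_iff (by omega) (by omega) m)
          (two_iff (by omega) (by omega) m)).symm
      · rw [cast3 (recb2 hs6 m), apery3 m ihm.1, val3]
        by_cases hG : GoodD m
        · rw [if_pos hG, if_pos ((good_iff (by omega) (by omega) m).mpr hG)]
        · rw [if_neg hG, if_neg (fun h => hG ((good_iff (by omega) (by omega) m).mp h)),
              if_neg (not_onelow (by omega) (by omega) m)]

end values

section digits
variable {d : ℕ → ℕ}

lemma sum_digits_lt (hd2 : ∀ i, d i ≤ 2) : ∀ M, ∑ t ∈ Finset.range M, d t * 3^t < 3^M := by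
  intro M
  induction M with
  | zero => simp
  | succ M ih =>
    rw [Finset.sum_range_succ]
    have h1 : d M * 3^M ≤ 2 * 3^M := Nat.mul_le_mul_right _ (hd2 M)
    have h2 : (3:ℕ)^(M+1) = 3^M + 2*3^M := by ring
    omega

lemma dig_sum (hd2 : ∀ i, d i ≤ 2) {M i : ℕ} (hi : i < M) :
    dig (∑ t ∈ Finset.range M, d t * 3^t) i = d i := by
  obtain ⟨K, hK⟩ : ∃ K, M - i = K + 1 := ⟨M-i-1, by omega⟩
  set L := ∑ t ∈ Finset.range i, d t * 3^t with hL
  set T := ∑ u ∈ Finset.range K, d (i+(u+1)) * 3^u with hT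
  have hsplit : ∑ t ∈ Finset.range M, d t * 3^t
      = L + ∑ t ∈ Finset.Ico i M, d t * 3^t := by
    rw [hL, Finset.range_eq_Ico, Finset.range_eq_Ico]
    exact (Finset.sum_Ico_consecutive (fun t => d t * 3^t) (Nat.zero_le i) (le_of_lt hi)).symm
  have hico : ∑ t ∈ Finset.Ico i M, d t * 3^t = 3^i * (d i + 3 * T) := by
    rw [Finset.sum_Ico_eq_sum_range, hK, Finset.sum_range_succ']
    have e1 : ∀ u ∈ Finset.range K,
        d (i+(u+1)) * 3^(i+(u+1)) = 3^i * (3 * (d (i+(u+1)) * 3^u)) := by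
      intro u _
      rw [pow_add, pow_succ]
      ring
    rw [Finset.sum_congr rfl e1, ← Finset.mul_sum, ← Finset.mul_sum, Nat.add_zero, ← hT]
    ring
  rw [hsplit, hico]
  unfold dig
  rw [Nat.add_mul_div_left _ _ (show 0 < (3:ℕ)^i from Nat.pow_pos (by omega)),
      Nat.div_eq_of_lt (sum_digits_lt hd2 i)]
  have := hd2 i
  omega

lemma dig_high {n i : ℕ} (h : n < 3^i) : dig n i = 0 := by
  unfold dig
  rw [Nat.div_eq_of_lt h]

end digits

section bridge
variable {m n : ℕ} {d : ℕ → ℕ}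
variable (hd2 : ∀ i, d i ≤ 2) (hd0 : ∀ i, m < i → d i = 0)
variable (hdig : ∀ i, i ≤ m → dig n i = d i) (hhigh : ∀ i, m < i → dig n i = 0)

include hd2 hdig hhigh in
lemma bridgeA : GoodD n ↔ ∀ i ≤ m, d i = 0 ∨ d i = 2 := by
  constructor
  · intro h i hi
    have h1 := h i
    rw [hdig i hi] at h1
    have := hd2 i
    omega
  · intro h i
    rcases le_or_gt i m with hi | hi
    · rw [hdig i hi]
      have := h i hi
      omega
    · rw [hhigh i hi]
      omega

include hd2 hd0 hdig hhigh in
lemma bridgeB : OneD n ↔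
    (digitCount d m 1 = 1 ∧ occ d m 1 1 = 0 ∧ ∀ i ≤ m, d i ≠ 1 → (d i = 0 ∨ d i = 2)) := by
  constructor
  · rintro ⟨i, hi1, hall⟩
    have him : i ≤ m := by
      by_contra hcon
      rw [hhigh i (by omega)] at hi1
      omega
    have huniq : ∀ j ≤ m, d j = 1 → j = i := by
      intro j hj hj1
      by_contra hcon
      exact hall j hcon (by rw [hdig j hj]; exact hj1)
    refine ⟨?_, ?_, fun t _ _ => by have := hd2 t; omega⟩
    · rw [digitCount, Finset.card_eq_one]
      refine ⟨i, Finset.ext fun j => ?_⟩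
      simp only [Finset.mem_filter, Finset.mem_range, Finset.mem_singleton]
      constructor
      · rintro ⟨hj, hj1⟩
        exact huniq j (by omega) hj1
      · rintro rfl
        exact ⟨by omega, by rw [← hdig _ him]; exact hi1⟩
    · rw [occ, Finset.card_eq_zero]
      rw [Finset.eq_empty_iff_forall_notMem]
      intro ν hν
      simp only [Finset.mem_filter, Finset.mem_Icc] at hν
      obtain ⟨⟨hν1, hν2⟩, ha, hb⟩ := hν
      rcases Nat.eq_or_lt_of_le hν2 with he | hlt
      · rw [hd0 ν (by omega)] at ha
        omega
      · have e1 : ν = i := huniq ν (by omega) ha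
        have e2 : ν - 1 = i := huniq (ν-1) (by omega) hb
        omega
  · rintro ⟨hc, -, -⟩
    rw [digitCount, Finset.card_eq_one] at hc
    obtain ⟨i, hfe⟩ := hc
    have hmemi : i < m + 1 ∧ d i = 1 := by
      have : i ∈ (Finset.range (m+1)).filter fun j => d j = 1 := by
        rw [hfe]; exact Finset.mem_singleton_self i
      simpa only [Finset.mem_filter, Finset.mem_range] using this
    refine ⟨i, by rw [hdig i (by omega)]; exact hmemi.2, fun j hj => ?_⟩
    rcases le_or_gt j m with hjm | hjm
    · rw [hdig j hjm]
      intro hj1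
      have : j ∈ (Finset.range (m+1)).filter fun t => d t = 1 := by
        simp only [Finset.mem_filter, Finset.mem_range]
        exact ⟨by omega, hj1⟩
      rw [hfe, Finset.mem_singleton] at this
      exact hj this
    · rw [hhigh j hjm]
      omega

include hd2 hd0 hdig hhigh in
lemma bridgeC : TwoD n ↔ uniqueOcc d m 1 1 := by
  constructor
  · rintro ⟨i, h1, h2, hall⟩
    have him1 : i + 1 ≤ m := by
      by_contra hcon
      rw [hhigh (i+1) (by omega)] at h2
      omega
    have hset : ∀ ν, 1 ≤ ν → ν ≤ m + 1 → d ν = 1 → d (ν-1) = 1 → ν = i + 1 := by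
      intro ν hν1 hν2 ha hb
      have hνm : ν ≤ m := by
        rcases Nat.eq_or_lt_of_le hν2 with he | hlt
        · rw [hd0 ν (by omega)] at ha; omega
        · omega
      have hda : dig n ν = 1 := by rw [hdig ν hνm]; exact ha
      have hdb : dig n (ν-1) = 1 := by rw [hdig (ν-1) (by omega)]; exact hb
      have c1 : ν = i ∨ ν = i + 1 := by
        by_contra hcon
        push_neg at hcon
        exact hall ν hcon.1 hcon.2 hda
      have c2 : ν - 1 = i ∨ ν - 1 = i + 1 := by
        by_contra hcon
        push_neg at hcon
        exact hall (ν-1) hcon.1 hcon.2 hdb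
      omega
    constructor
    · rw [occ, Finset.card_eq_one]
      refine ⟨i+1, Finset.ext fun ν => ?_⟩
      simp only [Finset.mem_filter, Finset.mem_Icc, Finset.mem_singleton]
      constructor
      · rintro ⟨⟨hν1, hν2⟩, ha, hb⟩
        exact hset ν hν1 hν2 ha hb
      · rintro rfl
        refine ⟨⟨by omega, by omega⟩, by rw [← hdig (i+1) him1]; exact h2, ?_⟩
        rw [show i+1-1 = i by omega, ← hdig i (by omega)]
        exact h1
    · intro ν hν hab t ht hne1 hne2
      simp only [Finset.mem_Icc] at hν
      have hνi : ν = i + 1 := hset ν hν.1 hν.2 hab.1 hab.2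
      have : dig n t ≠ 1 := hall t (by omega) (by omega)
      rw [hdig t ht] at this
      have := hd2 t
      omega
  · rintro ⟨hocc, hclause⟩
    rw [occ, Finset.card_eq_one] at hocc
    obtain ⟨ν, hfe⟩ := hocc
    have hmem : (1 ≤ ν ∧ ν ≤ m + 1) ∧ d ν = 1 ∧ d (ν-1) = 1 := by
      have : ν ∈ (Finset.Icc 1 (m+1)).filter fun t => d t = 1 ∧ d (t-1) = 1 := by
        rw [hfe]; exact Finset.mem_singleton_self ν
      simpa only [Finset.mem_filter, Finset.mem_Icc] using this
    obtain ⟨⟨hν1, hν2⟩, ha, hb⟩ := hmem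
    have hνm : ν ≤ m := by
      rcases Nat.eq_or_lt_of_le hν2 with he | hlt
      · rw [hd0 ν (by omega)] at ha; omega
      · omega
    obtain ⟨i, rfl⟩ : ∃ i, ν = i + 1 := ⟨ν-1, by omega⟩
    refine ⟨i, ?_, ?_, fun j hne1 hne2 => ?_⟩
    · rw [hdig i (by omega), show i = i+1-1 by omega]
      exact hb
    · rw [hdig (i+1) hνm]
      exact ha
    · rcases le_or_gt j m with hjm | hjm
      · rw [hdig j hjm]
        have := hclause (i+1) (by simp only [Finset.mem_Icc]; omega) ⟨ha, hb⟩ j hjm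
          (by omega) (by simp only [show i+1-1 = i by omega]; omega)
        omega
      · rw [hhigh j hjm]
        omega

end bridge


/-- Apéry numbers mod 9 for `r ≡ 1 (mod 6)`, `s ≡ 1 (mod 6)`, `r, s ≥ 7`, or
`r ≡ 4 (mod 6)`, `s ≡ 1 (mod 6)`. -/
theorem apery_mod_nine_r4_s1 (r s : ℕ) (hr : 0 < r) (hs : 0 < s)
    (hrs : (r % 6 = 1 ∧ s % 6 = 1 ∧ 7 ≤ r ∧ 7 ≤ s) ∨ (r % 6 = 4 ∧ s % 6 = 1))
    (n m : ℕ) (d : ℕ → ℕ) (hd2 : ∀ i, d i ≤ 2) (hd0 : ∀ i, m < i → d i = 0)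
    (hn : n = ∑ i ∈ Finset.range (m + 1), d i * 3 ^ i) :
    (apery r s n ≡ 1 [MOD 9] ↔ (∀ i ≤ m, d i = 0 ∨ d i = 2)) ∧
    (apery r s n ≡ 3 [MOD 9] ↔ (digitCount d m 1 = 1 ∧ occ d m 1 1 = 0 ∧ ∀ i ≤ m, d i ≠ 1 → (d i = 0 ∨ d i = 2))) ∧
    (apery r s n ≡ 6 [MOD 9] ↔ uniqueOcc d m 1 1) ∧
    (¬ (∀ i ≤ m, d i = 0 ∨ d i = 2) ∧ ¬ (digitCount d m 1 = 1 ∧ occ d m 1 1 = 0 ∧ ∀ i ≤ m, d i ≠ 1 → (d i = 0 ∨ d i = 2)) ∧ ¬ uniqueOcc d m 1 1 → 9 ∣ apery r s n) ∧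
    ¬ (apery r s n ≡ 2 [MOD 9]) ∧
    ¬ (apery r s n ≡ 4 [MOD 9]) ∧
    ¬ (apery r s n ≡ 5 [MOD 9]) ∧
    ¬ (apery r s n ≡ 7 [MOD 9]) ∧
    ¬ (apery r s n ≡ 8 [MOD 9]) := by

  classical
  have hr2 : 2 ≤ r := by rcases hrs with ⟨h1,h2,h3,h4⟩|⟨h1,h2⟩ <;> omega
  have hr3 : r % 3 = 1 := by rcases hrs with ⟨h1,h2,h3,h4⟩|⟨h1,h2⟩ <;> omega
  have hs6 : s % 6 = 1 := by rcases hrs with ⟨h1,h2,h3,h4⟩|⟨h1,h2⟩ <;> omega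
  have hS : s = 1 → r % 2 = 0 := by rcases hrs with ⟨h1,h2,h3,h4⟩|⟨h1,h2⟩ <;> intro h <;> omega
  have hv : (apery r s n : ZMod 9) = val9 n := (values hr2 hr3 hs6 hS n).1
  have hdig : ∀ i, i ≤ m → dig n i = d i := fun i hi => by
    rw [hn]; exact dig_sum hd2 (by omega)
  have hhigh : ∀ i, m < i → dig n i = 0 := fun i hi => by
    rw [hn]
    exact dig_high (lt_of_lt_of_le (sum_digits_lt hd2 (m+1))
      (Nat.pow_le_pow_right (by omega) (by omega)))
  have hA := bridgeA hd2 hdig hhigh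
  have hB := bridgeB hd2 hd0 hdig hhigh
  have hC := bridgeC hd2 hd0 hdig hhigh
  have key : ∀ c : ℕ, (apery r s n ≡ c [MOD 9]) ↔ (val9 n = (c : ZMod 9)) := fun c => by
    rw [← hv]
    exact ⟨fun h => (ZMod.natCast_eq_natCast_iff _ _ _).mpr h,
           fun h => (ZMod.natCast_eq_natCast_iff _ _ _).mp h⟩
  by_cases hG : GoodD n
  · have hval : val9 n = 1 := by rw [val9, if_pos hG]
    refine ⟨?_, ?_, ?_, ?_, ?_, ?_, ?_, ?_, ?_⟩
    · exact iff_of_true ((key 1).mpr (by rw [hval]; decide)) (hA.mp hG)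
    · exact iff_of_false (fun h => by rw [key 3, hval] at h; exact absurd h (by decide))
        (fun h => good_not_one hG (hB.mpr h))
    · exact iff_of_false (fun h => by rw [key 6, hval] at h; exact absurd h (by decide))
        (fun h => good_not_two hG (hC.mpr h))
    · rintro ⟨ha, -, -⟩; exact absurd (hA.mp hG) ha
    · intro h; rw [key 2, hval] at h; exact absurd h (by decide)
    · intro h; rw [key 4, hval] at h; exact absurd h (by decide)
    · intro h; rw [key 5, hval] at h; exact absurd h (by decide)
    · intro h; rw [key 7, hval] at h; exact absurd h (by decide)
    · intro h; rw [key 8, hval] at h; exact absurd h (by decide)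
  · by_cases hO : OneD n
    · have hval : val9 n = 3 := by rw [val9, if_neg hG, if_pos hO]
      refine ⟨?_, ?_, ?_, ?_, ?_, ?_, ?_, ?_, ?_⟩
      · exact iff_of_false (fun h => by rw [key 1, hval] at h; exact absurd h (by decide))
          (fun h => hG (hA.mpr h))
      · exact iff_of_true ((key 3).mpr (by rw [hval]; decide)) (hB.mp hO)
      · exact iff_of_false (fun h => by rw [key 6, hval] at h; exact absurd h (by decide))
          (fun h => one_not_two hO (hC.mpr h))
      · rintro ⟨-, hb, -⟩; exact absurd (hB.mp hO) hb
      · intro h; rw [key 2, hval] at h; exact absurd h (by decide)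
      · intro h; rw [key 4, hval] at h; exact absurd h (by decide)
      · intro h; rw [key 5, hval] at h; exact absurd h (by decide)
      · intro h; rw [key 7, hval] at h; exact absurd h (by decide)
      · intro h; rw [key 8, hval] at h; exact absurd h (by decide)
    · by_cases hT : TwoD n
      · have hval : val9 n = 6 := by rw [val9, if_neg hG, if_neg hO, if_pos hT]
        refine ⟨?_, ?_, ?_, ?_, ?_, ?_, ?_, ?_, ?_⟩
        · exact iff_of_false (fun h => by rw [key 1, hval] at h; exact absurd h (by decide))
            (fun h => hG (hA.mpr h))
        · exact iff_of_false (fun h => by rw [key 3, hval] at h; exact absurd h (by decide))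
            (fun h => hO (hB.mpr h))
        · exact iff_of_true ((key 6).mpr (by rw [hval]; decide)) (hC.mp hT)
        · rintro ⟨-, -, hc⟩; exact absurd (hC.mp hT) hc
        · intro h; rw [key 2, hval] at h; exact absurd h (by decide)
        · intro h; rw [key 4, hval] at h; exact absurd h (by decide)
        · intro h; rw [key 5, hval] at h; exact absurd h (by decide)
        · intro h; rw [key 7, hval] at h; exact absurd h (by decide)
        · intro h; rw [key 8, hval] at h; exact absurd h (by decide)
      · have hval : val9 n = 0 := by rw [val9, if_neg hG, if_neg hO, if_neg hT]
        refine ⟨?_, ?_, ?_, ?_, ?_, ?_, ?_, ?_, ?_⟩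
        · exact iff_of_false (fun h => by rw [key 1, hval] at h; exact absurd h (by decide))
            (fun h => hG (hA.mpr h))
        · exact iff_of_false (fun h => by rw [key 3, hval] at h; exact absurd h (by decide))
            (fun h => hO (hB.mpr h))
        · exact iff_of_false (fun h => by rw [key 6, hval] at h; exact absurd h (by decide))
            (fun h => hT (hC.mpr h))
        · intro _
          exact (ZMod.natCast_eq_zero_iff _ _).mp (hv.trans hval)
        · intro h; rw [key 2, hval] at h; exact absurd h (by decide)
        · intro h; rw [key 4, hval] at h; exact absurd h (by decide)
        · intro h; rw [key 5, hval] at h; exact absurd h (by decide)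
        · intro h; rw [key 7, hval] at h; exact absurd h (by decide)
        · intro h; rw [key 8, hval] at h; exact absurd h (by decide)
end
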